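/- arXiv:math/0507292 — 5 statements merged into one kernel-verified Lean document; each statement's English description precedes it below -/
import Mathlib

section
/- Let A be an admissible subcategory of a triangulated category T. Then the right mutation R_A vanishes on A and its restriction to A^⊥ is an equivalence A^⊥ → ^⊥A; similarly, the left mutation L_A vanishes on A and its restriction to ^⊥A is an equivalence ^⊥A → A^⊥. -/
namespace HPD

open CategoryTheory Limits Pretriangulated

universe v u

variable {C : Type u} [Category.{v} C]

section Preadd
variable [Preadditive C]

/-- The right orthogonal to a set of objects. -/
def rightOrth (A : Set C) : Set C := {T : C | ∀ a ∈ A, ∀ f : a ⟶ T, f = 0}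

/-- The left orthogonal to a set of objects. -/
def leftOrth (A : Set C) : Set C := {T : C | ∀ a ∈ A, ∀ f : T ⟶ a, f = 0}

end Preadd

/-- The inclusion functor of the full subcategory on a set of objects. -/
abbrev incl (A : Set C) : ObjectProperty.FullSubcategory (fun X : C => X ∈ A) ⥤ C :=
  ObjectProperty.ι _

/-- A full subcategory is right admissible if its inclusion functor admits a right adjoint. -/
def RightAdmissible (A : Set C) : Prop := (incl A).IsLeftAdjoint

/-- A full subcategory is left admissible if its inclusion functor admits a left adjoint. -/
def LeftAdmissible (A : Set C) : Prop := (incl A).IsRightAdjoint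

/-- A full subcategory is admissible if it is both left and right admissible. -/
def Admissible (A : Set C) : Prop := RightAdmissible A ∧ LeftAdmissible A

section Triang

variable [HasZeroObject C] [Preadditive C] [HasShift C ℤ]
  [∀ n : ℤ, (shiftFunctor C n).Additive] [Pretriangulated C]

/-- A set of objects is a (strictly full) triangulated subcategory. -/
structure IsTriangulatedSub (A : Set C) : Prop where
  zero : ∀ X : C, IsZero X → X ∈ A
  isoClosed : ∀ ⦃X Y : C⦄, (X ≅ Y) → X ∈ A → Y ∈ A
  shift : ∀ (X : C) (n : ℤ), X ∈ A → X⟦n⟧ ∈ A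
  ext₂ : ∀ T : Triangle C, T ∈ (distTriang C) → T.obj₁ ∈ A → T.obj₃ ∈ A → T.obj₂ ∈ A

/-- The minimal strictly full triangulated subcategory containing a set of objects. -/
def triangulatedClosure (S : Set C) : Set C :=
  {X : C | ∀ A : Set C, IsTriangulatedSub A → S ⊆ A → X ∈ A}

/-- A family is semiorthogonal if there are no nonzero morphisms from objects of a later
subcategory to objects of an earlier one. -/
def IsSemiorthogonal {n : ℕ} (A : Fin n → Set C) : Prop :=
  ∀ ⦃i j : Fin n⦄, j < i → ∀ a ∈ A i, ∀ b ∈ A j, ∀ f : a ⟶ b, f = 0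

/-- `IsSODOn S A` : the family `A` is a semiorthogonal decomposition of the (strictly full
triangulated) subcategory with objects `S`; every object of `S` admits a filtration
`0 = T_n → ... → T_1 → T_0 = T` whose `k`-th cone lies in `A k`. -/
structure IsSODOn {n : ℕ} (S : Set C) (A : Fin n → Set C) : Prop where
  subset : ∀ i, A i ⊆ S
  semiorthogonal : IsSemiorthogonal A
  filtration : ∀ T ∈ S, ∃ (F : Fin (n+1) → C) (f : ∀ k : Fin n, F k.succ ⟶ F k.castSucc),
    F 0 = T ∧ IsZero (F (Fin.last n)) ∧
    ∀ k : Fin n, ∃ (Q : C) (g : F k.castSucc ⟶ Q) (h : Q ⟶ (F k.succ)⟦(1 : ℤ)⟧),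
      Q ∈ A k ∧ Triangle.mk (f k) g h ∈ distTriang C

end Triang

end HPD
namespace HPD
open CategoryTheory Limits Pretriangulated

section AuxLemmas

universe v u

variable {C : Type u} [Category.{v} C]
variable [HasZeroObject C] [Preadditive C] [HasShift C ℤ]
  [∀ n : ℤ, (shiftFunctor C n).Additive] [Pretriangulated C]
variable {A : Set C}

lemma leftOrth_shift (hA : ∀ (X : C) (n : ℤ), X ∈ A → X⟦n⟧ ∈ A) {X : C}
    (hX : X ∈ leftOrth A) (n : ℤ) : X⟦n⟧ ∈ leftOrth A := by
  intro a ha f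
  set e := (shiftEquiv C n).toAdjunction.homEquiv X a
  have h0 : e f = 0 := hX _ (hA a (-n) ha) _
  have hf : f = e.symm (e f) := (e.symm_apply_apply f).symm
  rw [hf, h0, Adjunction.homEquiv_counit, Functor.map_zero, zero_comp]
  rfl

lemma rightOrth_shift (hA : ∀ (X : C) (n : ℤ), X ∈ A → X⟦n⟧ ∈ A) {X : C}
    (hX : X ∈ rightOrth A) (n : ℤ) : X⟦n⟧ ∈ rightOrth A := by
  intro a ha f
  set e := (shiftEquiv' C (-n) n (neg_add_cancel n)).toAdjunction.homEquiv a X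
  have h0 : e.symm f = 0 := hX _ (hA a (-n) ha) _
  have hf : f = e (e.symm f) := (e.apply_symm_apply f).symm
  rw [hf, h0, Adjunction.homEquiv_unit, Functor.map_zero, comp_zero]
  rfl

lemma unit_comp_bijective {D : Set C} {Λ : C ⥤ ObjectProperty.FullSubcategory (fun X : C => X ∈ D)}
    (adj : Λ ⊣ incl D) (T : C) {W : C} (hW : W ∈ D) :
    Function.Bijective
      (fun h : ((incl D).obj (Λ.obj T) ⟶ W) => adj.unit.app T ≫ h) := by
  have he : (fun h : ((incl D).obj (Λ.obj T) ⟶ W) => adj.unit.app T ≫ h)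
      = (adj.homEquiv T ⟨W, hW⟩) ∘ (fun h => ObjectProperty.homMk h) := by
    funext h
    rw [Function.comp_apply, Adjunction.homEquiv_unit]
    rfl
  rw [he]
  exact (adj.homEquiv T ⟨W, hW⟩).bijective.comp
    ⟨fun a b h => congrArg InducedCategory.Hom.hom h, ObjectProperty.homMk_surjective⟩

lemma counit_comp_bijective {D : Set C} {ρ : C ⥤ ObjectProperty.FullSubcategory (fun X : C => X ∈ D)}
    (adj : incl D ⊣ ρ) (T : C) {W : C} (hW : W ∈ D) :
    Function.Bijective
      (fun h : (W ⟶ (incl D).obj (ρ.obj T)) => h ≫ adj.counit.app T) := by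
  have he : (fun h : (W ⟶ (incl D).obj (ρ.obj T)) => h ≫ adj.counit.app T)
      = (adj.homEquiv ⟨W, hW⟩ T).symm ∘ (fun h => ObjectProperty.homMk h) := by
    funext h
    rw [Function.comp_apply, Adjunction.homEquiv_counit]
    rfl
  rw [he]
  exact (adj.homEquiv ⟨W, hW⟩ T).symm.bijective.comp
    ⟨fun a b h => congrArg InducedCategory.Hom.hom h, ObjectProperty.homMk_surjective⟩

lemma comp_mor₂_bijective {T : Triangle C} (hT : T ∈ distTriang C) {V : C}
    (h1 : ∀ f : V ⟶ T.obj₁, f = 0) (h1' : ∀ f : V ⟶ T.obj₁⟦(1:ℤ)⟧, f = 0) :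
    Function.Bijective (fun f : V ⟶ T.obj₂ => f ≫ T.mor₂) := by
  constructor
  · intro f₁ f₂ h
    have h' : f₁ ≫ T.mor₂ = f₂ ≫ T.mor₂ := h
    have hz : (f₁ - f₂) ≫ T.mor₂ = 0 := by
      rw [Preadditive.sub_comp, h', sub_self]
    obtain ⟨g, hg⟩ := Triangle.coyoneda_exact₂ T hT _ hz
    rw [h1 g, zero_comp] at hg
    exact sub_eq_zero.mp hg
  · intro φ
    obtain ⟨f, hf⟩ := Triangle.coyoneda_exact₃ T hT φ (h1' _)
    exact ⟨f, hf.symm⟩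

lemma mor₁_comp_bijective {T : Triangle C} (hT : T ∈ distTriang C) {V : C}
    (h3 : ∀ f : T.obj₃ ⟶ V, f = 0) (h3' : ∀ f : T.obj₃⟦(-1:ℤ)⟧ ⟶ V, f = 0) :
    Function.Bijective (fun f : T.obj₂ ⟶ V => T.mor₁ ≫ f) := by
  constructor
  · intro f₁ f₂ h
    have h' : T.mor₁ ≫ f₁ = T.mor₁ ≫ f₂ := h
    have hz : T.mor₁ ≫ (f₁ - f₂) = 0 := by
      rw [Preadditive.comp_sub, h', sub_self]
    obtain ⟨g, hg⟩ := Triangle.yoneda_exact₂ T hT _ hz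
    rw [h3 g, comp_zero] at hg
    exact sub_eq_zero.mp hg
  · intro φ
    have hT' := inv_rot_of_distTriang T hT
    obtain ⟨g, hg⟩ := Triangle.yoneda_exact₂ T.invRotate hT' φ (h3' _)
    exact ⟨g, hg.symm⟩

lemma exists_fib {D : Set C} (hDs : ∀ X ∈ D, X⟦(1:ℤ)⟧ ∈ D)
    {Λ : C ⥤ ObjectProperty.FullSubcategory (fun X : C => X ∈ D)} (adj : Λ ⊣ incl D) (T : C) :
    ∃ (a : C) (v : a ⟶ T) (w : (incl D).obj (Λ.obj T) ⟶ a⟦(1:ℤ)⟧),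
      (Triangle.mk v (adj.unit.app T) w ∈ distTriang C) ∧ a ∈ leftOrth D := by
  obtain ⟨a, v, w, hΔ⟩ := distinguished_cocone_triangle₁ (adj.unit.app T)
  refine ⟨a, v, w, hΔ, ?_⟩
  intro W hW f
  have hΔ' := inv_rot_of_distTriang _ hΔ
  have key : (Triangle.mk v (adj.unit.app T) w).invRotate.mor₁ ≫ f = 0 := by
    have h23 : adj.unit.app T ≫ w = 0 := comp_distTriang_mor_zero₂₃ _ hΔ
    have key0 : (shiftEquiv' C (-1:ℤ) (1:ℤ) (neg_add_cancel 1)).functor.map (adj.unit.app T) ≫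
        ((Triangle.mk v (adj.unit.app T) w).invRotate.mor₁ ≫ f) = 0 := by
      show (shiftFunctor C (-1:ℤ)).map (adj.unit.app T) ≫ _ = 0
      have h0 : (shiftFunctor C (-1:ℤ)).map (adj.unit.app T) ≫
          (Triangle.mk v (adj.unit.app T) w).invRotate.mor₁ = 0 := by
        show (shiftFunctor C (-1:ℤ)).map (adj.unit.app T) ≫
          (-(w⟦(-1:ℤ)⟧' ≫ (shiftEquiv C (1:ℤ)).unitIso.inv.app a)) = 0
        rw [Preadditive.comp_neg, neg_eq_zero]
        exact (Category.assoc _ _ _).symm.trans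
          (by rw [← Functor.map_comp, h23, Functor.map_zero]; exact zero_comp)
      exact (Category.assoc _ _ _).symm.trans ((congrArg (· ≫ f) h0).trans zero_comp)
    have h2 : adj.unit.app T ≫
        ((shiftEquiv' C (-1:ℤ) (1:ℤ) (neg_add_cancel 1)).toAdjunction.homEquiv
          ((Λ ⋙ incl D).obj T) W
          ((Triangle.mk v (adj.unit.app T) w).invRotate.mor₁ ≫ f)) = 0 := by
      rw [← Adjunction.homEquiv_naturality_left, key0, Adjunction.homEquiv_unit,
        Functor.map_zero, comp_zero]
    have hinj := (unit_comp_bijective adj T (hDs W hW)).1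
    have h3 : (shiftEquiv' C (-1:ℤ) (1:ℤ) (neg_add_cancel 1)).toAdjunction.homEquiv
        ((Λ ⋙ incl D).obj T) W
        ((Triangle.mk v (adj.unit.app T) w).invRotate.mor₁ ≫ f) = 0 := by
      apply hinj
      show adj.unit.app T ≫ _ = adj.unit.app T ≫ (0 : (incl D).obj (Λ.obj T) ⟶ W⟦(1:ℤ)⟧)
      exact h2.trans comp_zero.symm
    have h4 := congrArg ((shiftEquiv' C (-1:ℤ) (1:ℤ) (neg_add_cancel 1)).toAdjunction.homEquiv
        ((Λ ⋙ incl D).obj T) W).symm h3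
    rw [Equiv.symm_apply_apply] at h4
    exact h4.trans (by rw [Adjunction.homEquiv_counit, Functor.map_zero, zero_comp]; rfl)
  obtain ⟨g, hg⟩ := Triangle.yoneda_exact₂ _ hΔ' f key
  obtain ⟨k, hk⟩ := (unit_comp_bijective adj T hW).2 g
  have hk' : adj.unit.app T ≫ k = g := hk
  rw [hg, ← hk']
  have h12 : v ≫ adj.unit.app T = 0 := comp_distTriang_mor_zero₁₂ _ hΔ
  show v ≫ adj.unit.app T ≫ k = 0
  rw [← Category.assoc, h12, zero_comp]

lemma exists_cone {D : Set C} (hDs : ∀ X ∈ D, X⟦(-1:ℤ)⟧ ∈ D)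
    {ρ : C ⥤ ObjectProperty.FullSubcategory (fun X : C => X ∈ D)} (adj : incl D ⊣ ρ) (T : C) :
    ∃ (b : C) (g : T ⟶ b) (h : b ⟶ ((incl D).obj (ρ.obj T))⟦(1:ℤ)⟧),
      (Triangle.mk (adj.counit.app T) g h ∈ distTriang C) ∧ b ∈ rightOrth D := by
  obtain ⟨b, g, h, hΔ⟩ := distinguished_cocone_triangle (adj.counit.app T)
  refine ⟨b, g, h, hΔ, ?_⟩
  intro W hW f
  have hfh : f ≫ h = 0 := by
    have happ : (shiftEquiv' C (-1:ℤ) (1:ℤ) (neg_add_cancel 1)).toAdjunction.homEquiv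
        W ((ρ ⋙ incl D).obj T)
        (((shiftEquiv' C (-1:ℤ) (1:ℤ) (neg_add_cancel 1)).toAdjunction.homEquiv
          W ((ρ ⋙ incl D).obj T)).symm (f ≫ h)) = f ≫ h := Equiv.apply_symm_apply _ _
    have h31 : h ≫ (shiftEquiv' C (-1:ℤ) (1:ℤ) (neg_add_cancel 1)).inverse.map
        (adj.counit.app T) = 0 := comp_distTriang_mor_zero₃₁ _ hΔ
    have h1 : (shiftEquiv' C (-1:ℤ) (1:ℤ) (neg_add_cancel 1)).toAdjunction.homEquiv W T
        ((((shiftEquiv' C (-1:ℤ) (1:ℤ) (neg_add_cancel 1)).toAdjunction.homEquiv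
          W ((ρ ⋙ incl D).obj T)).symm (f ≫ h)) ≫ adj.counit.app T) = 0 := by
      rw [Adjunction.homEquiv_naturality_right, happ]
      exact (Category.assoc _ _ _).trans ((congrArg (f ≫ ·) h31).trans comp_zero)
    have hmc : (((shiftEquiv' C (-1:ℤ) (1:ℤ) (neg_add_cancel 1)).toAdjunction.homEquiv
        W ((ρ ⋙ incl D).obj T)).symm (f ≫ h)) ≫ adj.counit.app T = 0 := by
      have h2 := congrArg ((shiftEquiv' C (-1:ℤ) (1:ℤ)
        (neg_add_cancel 1)).toAdjunction.homEquiv W T).symm h1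
      rw [Equiv.symm_apply_apply] at h2
      rw [h2, Adjunction.homEquiv_counit, Functor.map_zero, zero_comp]
    have hinj := (counit_comp_bijective adj T (hDs W hW)).1
    have hm0 : ((shiftEquiv' C (-1:ℤ) (1:ℤ) (neg_add_cancel 1)).toAdjunction.homEquiv
        W ((ρ ⋙ incl D).obj T)).symm (f ≫ h) = 0 := by
      apply hinj
      show _ ≫ adj.counit.app T = (0 : W⟦(-1:ℤ)⟧ ⟶ (ρ ⋙ incl D).obj T) ≫ adj.counit.app T
      exact hmc.trans zero_comp.symm
    rw [← happ, hm0, Adjunction.homEquiv_unit, Functor.map_zero, comp_zero]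
    rfl
  obtain ⟨k, hk⟩ := Triangle.coyoneda_exact₃ _ hΔ f hfh
  obtain ⟨k', hk'⟩ := (counit_comp_bijective adj T hW).2 k
  have hk'' : k' ≫ adj.counit.app T = k := hk'
  rw [hk, ← hk'']
  have h12 : adj.counit.app T ≫ g = 0 := comp_distTriang_mor_zero₁₂ _ hΔ
  show (k' ≫ adj.counit.app T) ≫ g = 0
  rw [Category.assoc, h12, comp_zero]

lemma leftOrth_rightOrth_subset (hA : IsTriangulatedSub A) (hadm : RightAdmissible A) :
    leftOrth (rightOrth A) ⊆ A := by
  intro P hP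
  have hladj : (incl A).IsLeftAdjoint := hadm
  have adj : incl A ⊣ (incl A).rightAdjoint := Adjunction.ofIsLeftAdjoint (incl A)
  obtain ⟨b, g, hmap, hΔ, hb⟩ := exists_cone (fun X hX => hA.shift X (-1) hX) adj P
  have hg : g = 0 := hP b hb g
  obtain ⟨s, hs⟩ := Triangle.coyoneda_exact₂ _ hΔ (𝟙 P) (by
    show 𝟙 P ≫ g = 0
    rw [hg, Limits.comp_zero])
  have hs' : 𝟙 P = s ≫ adj.counit.app P := hs
  have hbij := counit_comp_bijective adj P ((incl A).rightAdjoint.obj P).property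
  have hcs : adj.counit.app P ≫ s = 𝟙 _ := by
    apply hbij.1
    show (adj.counit.app P ≫ s) ≫ adj.counit.app P = 𝟙 _ ≫ adj.counit.app P
    exact (Category.assoc _ _ _).trans
      ((congrArg (adj.counit.app P ≫ ·) hs'.symm).trans (by simp))
  exact hA.isoClosed ⟨adj.counit.app P, s, hcs, hs'.symm⟩ ((incl A).rightAdjoint.obj P).property

lemma rightOrth_leftOrth_subset (hA : IsTriangulatedSub A) (hadm : LeftAdmissible A) :
    rightOrth (leftOrth A) ⊆ A := by
  intro P hP
  have hradj : (incl A).IsRightAdjoint := hadm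
  have adj : (incl A).leftAdjoint ⊣ incl A := Adjunction.ofIsRightAdjoint (incl A)
  obtain ⟨a, v, w, hΔ, ha⟩ := exists_fib (fun X hX => hA.shift X 1 hX) adj P
  have hv : v = 0 := hP a ha v
  obtain ⟨t, ht⟩ := Triangle.yoneda_exact₂ _ hΔ (𝟙 P) (by
    show v ≫ 𝟙 P = 0
    rw [hv, Limits.zero_comp])
  have ht' : 𝟙 P = adj.unit.app P ≫ t := ht
  have hbij := unit_comp_bijective adj P ((incl A).leftAdjoint.obj P).property
  have htu : t ≫ adj.unit.app P = 𝟙 _ := by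
    apply hbij.1
    show adj.unit.app P ≫ t ≫ adj.unit.app P = adj.unit.app P ≫ 𝟙 _
    exact (Category.assoc _ _ _).symm.trans
      ((congrArg (· ≫ adj.unit.app P) ht'.symm).trans (by simp))
  exact hA.isoClosed ⟨t, adj.unit.app P, htu, ht'.symm⟩ ((incl A).leftAdjoint.obj P).property

end AuxLemmas

/-- Let `A` be an admissible (full triangulated) subcategory of a triangulated category,
`R = i_{^⊥A}^!` a right adjoint of the inclusion of `^⊥A` and `L = i_{A^⊥}^*` a left adjoint
of the inclusion of `A^⊥` (so that the right and left mutations are `R_A = i_{^⊥A} ∘ R` and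
`L_A = i_{A^⊥} ∘ L`).  Then `R_A` vanishes on `A` and restricts to an equivalence
`A^⊥ → ^⊥A`, and `L_A` vanishes on `A` and restricts to an equivalence `^⊥A → A^⊥`. -/
theorem statement_2 {C : Type u} [Category.{v} C] [HasZeroObject C] [Preadditive C]
    [HasShift C ℤ] [∀ n : ℤ, (shiftFunctor C n).Additive] [Pretriangulated C]
    (A : Set C) (hA : IsTriangulatedSub A) (hadm : Admissible A)
    (R : C ⥤ ObjectProperty.FullSubcategory (fun X : C => X ∈ leftOrth A))
    (adjR : incl (leftOrth A) ⊣ R)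
    (L : C ⥤ ObjectProperty.FullSubcategory (fun X : C => X ∈ rightOrth A))
    (adjL : L ⊣ incl (rightOrth A)) :
    (∀ a ∈ A, IsZero ((R ⋙ incl (leftOrth A)).obj a)) ∧
    (incl (rightOrth A) ⋙ R).IsEquivalence ∧
    (∀ a ∈ A, IsZero ((L ⋙ incl (rightOrth A)).obj a)) ∧
    (incl (leftOrth A) ⋙ L).IsEquivalence := by
  have part1 : ∀ a ∈ A, IsZero ((R ⋙ incl (leftOrth A)).obj a) := by
    intro a ha
    rw [IsZero.iff_id_eq_zero]
    have hinj : Function.Injective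
        (fun p : ((R.obj a).obj ⟶ (R.obj a).obj) => p ≫ adjR.counit.app a) := by
      have he : (fun p : ((R.obj a).obj ⟶ (R.obj a).obj) => p ≫ adjR.counit.app a)
          = (adjR.homEquiv (R.obj a) a).symm ∘ (fun p => ObjectProperty.homMk p) := by
        funext p
        rw [Function.comp_apply, Adjunction.homEquiv_counit]
        rfl
      rw [he]
      exact (adjR.homEquiv (R.obj a) a).symm.injective.comp
        (fun p q h => congrArg InducedCategory.Hom.hom h)
    have h0 : adjR.counit.app a = 0 := (R.obj a).property a ha (adjR.counit.app a)
    have hz := hinj (a₁ := 𝟙 _) (a₂ := 0) (by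
      show 𝟙 _ ≫ adjR.counit.app a = 0 ≫ adjR.counit.app a
      rw [Category.id_comp, Limits.zero_comp, h0])
    exact hz
  have part3 : ∀ a ∈ A, IsZero ((L ⋙ incl (rightOrth A)).obj a) := by
    intro a ha
    rw [IsZero.iff_id_eq_zero]
    have hinj : Function.Injective
        (fun p : ((L.obj a).obj ⟶ (L.obj a).obj) => adjL.unit.app a ≫ p) := by
      have he : (fun p : ((L.obj a).obj ⟶ (L.obj a).obj) => adjL.unit.app a ≫ p)
          = (adjL.homEquiv a (L.obj a)) ∘ (fun p => ObjectProperty.homMk p) := by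
        funext p
        rw [Function.comp_apply, Adjunction.homEquiv_unit]
        rfl
      rw [he]
      exact (adjL.homEquiv a (L.obj a)).injective.comp
        (fun p q h => congrArg InducedCategory.Hom.hom h)
    have h0 : adjL.unit.app a = 0 := (L.obj a).property a ha (adjL.unit.app a)
    have hz := hinj (a₁ := 𝟙 _) (a₂ := 0) (by
      show adjL.unit.app a ≫ 𝟙 _ = adjL.unit.app a ≫ 0
      rw [Category.comp_id, Limits.comp_zero, h0])
    exact hz
  have hsub1 : leftOrth (rightOrth A) ⊆ A := leftOrth_rightOrth_subset hA hadm.1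
  have hsub2 : rightOrth (leftOrth A) ⊆ A := rightOrth_leftOrth_subset hA hadm.2
  have hUnit : ∀ X, IsIso ((adjR.comp adjL).unit.app X) := by
    intro X
    obtain ⟨a, v, w, hΔ, ha'⟩ := exists_fib
      (fun Y hY => rightOrth_shift hA.shift hY 1) adjL X.obj
    have haA : a ∈ A := hsub1 ha'
    have key : ∀ V' : ObjectProperty.FullSubcategory (fun Y : C => Y ∈ leftOrth A),
        Function.Bijective (fun k : (V' ⟶ X) => k ≫ (adjR.comp adjL).unit.app X) := by
      intro V'
      have hb1 : Function.Bijective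
          (fun k : (V'.obj ⟶ X.obj) => k ≫ adjL.unit.app X.obj) :=
        comp_mor₂_bijective hΔ (fun f => V'.property a haA f)
          (fun f => V'.property _ (hA.shift a 1 haA) f)
      have hb2 := (adjR.homEquiv V' ((incl (rightOrth A)).obj (L.obj X.obj))).bijective
      have heq : (fun k : (V' ⟶ X) => k ≫ (adjR.comp adjL).unit.app X)
          = (fun g => adjR.homEquiv V' ((incl (rightOrth A)).obj (L.obj X.obj)) g) ∘
            (fun k : (V'.obj ⟶ X.obj) => k ≫ adjL.unit.app X.obj) ∘
            (fun k : (V' ⟶ X) => k.hom) := by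
        funext k
        show k ≫ (adjR.comp adjL).unit.app X
          = adjR.homEquiv V' ((incl (rightOrth A)).obj (L.obj X.obj))
              (k.hom ≫ adjL.unit.app X.obj)
        rw [Adjunction.comp_unit_app, Adjunction.homEquiv_unit, Functor.map_comp,
          ← Category.assoc, ← Category.assoc]
        exact congrArg (· ≫ R.map (adjL.unit.app ((incl (leftOrth A)).obj X)))
          (adjR.unit_naturality k).symm
      rw [heq]
      exact hb2.comp (hb1.comp ⟨fun p q h => ObjectProperty.hom_ext _ h,
        fun g => ⟨ObjectProperty.homMk g, rfl⟩⟩)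
    obtain ⟨g, hg⟩ :=
      (key ((incl (rightOrth A) ⋙ R).obj ((incl (leftOrth A) ⋙ L).obj X))).2 (𝟙 _)
    have hg' : g ≫ (adjR.comp adjL).unit.app X = 𝟙 _ := hg
    refine ⟨g, ?_, hg'⟩
    apply (key X).1
    show ((adjR.comp adjL).unit.app X ≫ g) ≫ (adjR.comp adjL).unit.app X
      = 𝟙 X ≫ (adjR.comp adjL).unit.app X
    rw [Category.assoc, hg']
    simp
  have hCounit : ∀ Y, IsIso ((adjR.comp adjL).counit.app Y) := by
    intro Y
    obtain ⟨b, g0, w, hΔ, hb'⟩ := exists_cone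
      (fun Z hZ => leftOrth_shift hA.shift hZ (-1)) adjR Y.obj
    have hbA : b ∈ A := hsub2 hb'
    have key : ∀ V' : ObjectProperty.FullSubcategory (fun Z : C => Z ∈ rightOrth A),
        Function.Bijective (fun k : (Y ⟶ V') => (adjR.comp adjL).counit.app Y ≫ k) := by
      intro V'
      have hb1 : Function.Bijective
          (fun k : (Y.obj ⟶ V'.obj) => adjR.counit.app Y.obj ≫ k) :=
        mor₁_comp_bijective hΔ (fun f => V'.property b hbA f)
          (fun f => V'.property _ (hA.shift b (-1) hbA) f)
      have hb2 := (adjL.homEquiv ((incl (leftOrth A)).obj (R.obj Y.obj)) V').symm.bijective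
      have heq : (fun k : (Y ⟶ V') => (adjR.comp adjL).counit.app Y ≫ k)
          = (fun g => (adjL.homEquiv ((incl (leftOrth A)).obj (R.obj Y.obj)) V').symm g) ∘
            (fun k : (Y.obj ⟶ V'.obj) => adjR.counit.app Y.obj ≫ k) ∘
            (fun k : (Y ⟶ V') => k.hom) := by
        funext k
        show (adjR.comp adjL).counit.app Y ≫ k
          = (adjL.homEquiv ((incl (leftOrth A)).obj (R.obj Y.obj)) V').symm
              (adjR.counit.app Y.obj ≫ k.hom)
        rw [Adjunction.comp_counit_app, Adjunction.homEquiv_counit, Functor.map_comp,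
          Category.assoc, Category.assoc]
        exact congrArg (L.map (adjR.counit.app ((incl (rightOrth A)).obj Y)) ≫ ·)
          (adjL.counit_naturality k).symm
      rw [heq]
      exact hb2.comp (hb1.comp ⟨fun p q h => ObjectProperty.hom_ext _ h,
        fun g => ⟨ObjectProperty.homMk g, rfl⟩⟩)
    obtain ⟨t, ht⟩ :=
      (key ((incl (leftOrth A) ⋙ L).obj ((incl (rightOrth A) ⋙ R).obj Y))).2 (𝟙 _)
    have ht' : (adjR.comp adjL).counit.app Y ≫ t = 𝟙 _ := ht
    refine ⟨t, ht', ?_⟩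
    apply (key Y).1
    show (adjR.comp adjL).counit.app Y ≫ t ≫ (adjR.comp adjL).counit.app Y
      = (adjR.comp adjL).counit.app Y ≫ 𝟙 Y
    rw [← Category.assoc, ht']
    simp
  haveI : ∀ X, IsIso ((adjR.comp adjL).unit.app X) := hUnit
  haveI : ∀ Y, IsIso ((adjR.comp adjL).counit.app Y) := hCounit
  exact ⟨part1, (adjR.comp adjL).toEquivalence.isEquivalence_inverse, part3,
    (adjR.comp adjL).toEquivalence.isEquivalence_functor⟩


end HPD
end

section
/- Assume T = ⟨A, B⟩ is a semiorthogonal decomposition of a triangulated category T. If both A and B are Ext-bounded and either A or B is admissible in T, then T is Ext-bounded. -/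
namespace HPD
open CategoryTheory Limits Pretriangulated

/-- A (full triangulated) subcategory `A` is Ext-bounded if for all objects `F, G` of `A`
the set `{n | Hom(F, G[n]) ≠ 0}` is finite. -/
def ExtBoundedOn {C : Type u} [Category.{v} C] [HasShift C ℤ] [Preadditive C]
    (A : Set C) : Prop :=
  ∀ F ∈ A, ∀ G ∈ A, {n : ℤ | ∃ f : F ⟶ G⟦n⟧, f ≠ 0}.Finite

section Aux2

variable {C : Type*} [Category C] [HasZeroObject C] [Preadditive C]
  [HasShift C ℤ] [∀ n : ℤ, (shiftFunctor C n).Additive] [Pretriangulated C]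

set_option linter.unusedSectionVars false in
lemma shift_map_ne_zero (n : ℤ) {X Y : C} {f : X ⟶ Y} (hf : f ≠ 0) :
    (shiftFunctor C n).map f ≠ 0 := fun h =>
  hf ((shiftFunctor C n).map_injective (by rw [h, Functor.map_zero]))

set_option linter.unusedSectionVars false in
lemma comp_hom_ne_zero {X Y Z : C} {f : X ⟶ Y} (e : Y ≅ Z) (hf : f ≠ 0) :
    f ≫ e.hom ≠ 0 := fun h => hf (by
  have := congrArg (· ≫ e.inv) h
  simpa using this)

set_option linter.unusedSectionVars false in
lemma hom_comp_ne_zero {X Y Z : C} {f : Y ⟶ Z} (e : X ≅ Y) (hf : f ≠ 0) :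
    e.hom ≫ f ≠ 0 := fun h => hf (by
  have := congrArg (e.inv ≫ ·) h
  simpa using this)

lemma exists_tri {A B : Set C} (hB : IsTriangulatedSub B)
    (hsod : IsSODOn Set.univ ![A, B]) (T : C) :
    ∃ (a b : C), a ∈ A ∧ b ∈ B ∧ ∃ (i : b ⟶ T) (p : T ⟶ a) (δ : a ⟶ b⟦(1:ℤ)⟧),
      Triangle.mk i p δ ∈ distTriang C := by
  obtain ⟨F, f, h0, hlast, hk⟩ := hsod.filtration T (Set.mem_univ T)
  obtain ⟨Q0, g0, d0, hQ0, ht0⟩ := hk 0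
  obtain ⟨Q1, g1, d1, hQ1, ht1⟩ := hk 1
  have hzero : IsZero (Triangle.mk (f 1) g1 d1).obj₁ := hlast
  have hiso : IsIso g1 := (Triangle.isZero₁_iff_isIso₂ _ ht1).1 hzero
  have hF1B : F ((1 : Fin 2).castSucc) ∈ B :=
    hB.isoClosed (asIso g1).symm (by simpa using hQ1)
  subst h0
  exact ⟨Q0, F ((0 : Fin 2).succ), by simpa using hQ0, hF1B, f 0, g0, d0, ht0⟩

lemma cross_finite {A B : Set C} (hA : IsTriangulatedSub A) (hB : IsTriangulatedSub B)
    (hAb : ExtBoundedOn A) (hBb : ExtBoundedOn B)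
    (hadm : Admissible A ∨ Admissible B) {aF bG : C} (haF : aF ∈ A) (hbG : bG ∈ B) :
    {n : ℤ | ∃ f : aF ⟶ bG⟦n⟧, f ≠ 0}.Finite := by
  rcases hadm with ⟨hRA, _⟩ | ⟨_, hLB⟩
  · obtain ⟨R, ⟨adj⟩⟩ := hRA
    apply Set.Finite.subset (hAb aF haF (R.obj bG).obj (R.obj bG).property)
    rintro n ⟨f, hf⟩
    let e1 : (shiftFunctor C n ⋙ shiftFunctor C (-n)).obj bG ≅ bG :=
      (shiftFunctorCompIsoId C n (-n) (by ring)).app bG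
    let f1 : (shiftFunctor C (-n)).obj aF ⟶ bG := (shiftFunctor C (-n)).map f ≫ e1.hom
    have hf1 : f1 ≠ 0 := comp_hom_ne_zero e1 (shift_map_ne_zero _ hf)
    let aobj : ObjectProperty.FullSubcategory (fun X : C => X ∈ A) :=
      ⟨(shiftFunctor C (-n)).obj aF, hA.shift aF (-n) haF⟩
    let g : (shiftFunctor C (-n)).obj aF ⟶ (R.obj bG).obj :=
      (incl A).map ((adj.homEquiv aobj bG) f1)
    have hg : g ≠ 0 := by
      intro h
      apply hf1
      have h2 := (adj.homEquiv aobj bG).symm_apply_apply f1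
      rw [Adjunction.homEquiv_counit] at h2
      rw [← h2, show (incl A).map ((adj.homEquiv aobj bG) f1) = g from rfl, h, zero_comp]
    let e2 : (shiftFunctor C (-n) ⋙ shiftFunctor C n).obj aF ≅ aF :=
      (shiftFunctorCompIsoId C (-n) n (by ring)).app aF
    exact ⟨e2.inv ≫ (shiftFunctor C n).map g,
      hom_comp_ne_zero e2.symm (shift_map_ne_zero n hg)⟩
  · obtain ⟨L, ⟨adj⟩⟩ := hLB
    apply Set.Finite.subset (hBb (L.obj aF).obj (L.obj aF).property bG hbG)
    rintro n ⟨f, hf⟩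
    let bobj : ObjectProperty.FullSubcategory (fun X : C => X ∈ B) :=
      ⟨(shiftFunctor C n).obj bG, hB.shift bG n hbG⟩
    let g : (L.obj aF).obj ⟶ (shiftFunctor C n).obj bG :=
      (incl B).map ((adj.homEquiv aF bobj).symm f)
    have hg : g ≠ 0 := by
      intro h
      apply hf
      have h2 := (adj.homEquiv aF bobj).apply_symm_apply f
      rw [Adjunction.homEquiv_unit] at h2
      rw [← h2, show (incl B).map ((adj.homEquiv aF bobj).symm f) = g from rfl, h, comp_zero]
    exact ⟨g, hg⟩

end Aux2

/-- If `T = ⟨A, B⟩` is a semiorthogonal decomposition, where both `A` and `B` are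
Ext-bounded and either `A` or `B` is admissible, then `T` is Ext-bounded. -/
theorem statement_8 {C : Type u} [Category.{v} C] [HasZeroObject C] [Preadditive C]
    [HasShift C ℤ] [∀ n : ℤ, (shiftFunctor C n).Additive] [Pretriangulated C]
    (A B : Set C) (hA : IsTriangulatedSub A) (hB : IsTriangulatedSub B)
    (hsod : IsSODOn Set.univ ![A, B])
    (hAb : ExtBoundedOn A) (hBb : ExtBoundedOn B)
    (hadm : Admissible A ∨ Admissible B) :
    ExtBoundedOn (Set.univ : Set C) := by
  intro F _ G _
  obtain ⟨aF, bF, haF, hbF, iF, pF, dF, hTF⟩ := exists_tri hB hsod F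
  obtain ⟨aG, bG, haG, hbG, iG, pG, dG, hTG⟩ := exists_tri hB hsod G
  have hAA := hAb aF haF aG haG
  have hBB := hBb bF hbF bG hbG
  have hX := cross_finite hA hB hAb hBb hadm haF hbG
  apply Set.Finite.subset ((hAA.union hBB).union hX)
  rintro n ⟨f, hf⟩
  have hTG' : Triangle.mk (n.negOnePow • (shiftFunctor C n).map iG)
      (n.negOnePow • (shiftFunctor C n).map pG)
      (n.negOnePow • (shiftFunctor C n).map dG ≫ (shiftFunctorComm C 1 n).hom.app bG)
      ∈ distTriang C := Triangle.shift_distinguished _ hTG n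
  by_cases h2 : f ≫ (n.negOnePow • (shiftFunctor C n).map pG) = 0
  · obtain ⟨g, hg⟩ := Triangle.coyoneda_exact₂ _ hTG' f h2
    have hgne : g ≠ 0 := fun h => hf (by rw [hg, h, zero_comp]; rfl)
    by_cases h3 : iF ≫ g = 0
    · obtain ⟨v, hv⟩ := Triangle.yoneda_exact₂ _ hTF g h3
      have hvne : v ≠ 0 := fun h => hgne (by rw [hv, h, comp_zero]; rfl)
      exact Or.inr ⟨v, hvne⟩
    · exact Or.inl (Or.inr ⟨iF ≫ g, h3⟩)
  · have hzero : iF ≫ (f ≫ (n.negOnePow • (shiftFunctor C n).map pG)) = 0 :=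
      hsod.semiorthogonal (show (0 : Fin 2) < 1 by decide) bF (by simpa using hbF)
        ((shiftFunctor C n).obj aG) (by simpa using hA.shift aG n haG) _
    obtain ⟨v, hv⟩ := Triangle.yoneda_exact₂ _ hTF _ hzero
    have hvne : v ≠ 0 := fun h => h2 (by rw [hv, h, comp_zero]; rfl)
    exact Or.inl (Or.inl ⟨v, hvne⟩)

end HPD
end

section
/- A right splitting exact functor Φ : B → A between triangulated categories admits a right adjoint; a left splitting exact functor admits a left adjoint. -/
namespace HPD
open CategoryTheory Limits Pretriangulated

universe v₂ u₂ v₁ u₁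

variable {B : Type u₁} [Category.{v₁} B] {A : Type u₂} [Category.{v₂} A]

/-- The kernel of a functor: the full subcategory of objects sent to zero. -/
def kerSet (Φ : B ⥤ A) : Set B := {X : B | IsZero (Φ.obj X)}

/-- The image of a functor: the objects isomorphic to `Φ X` for some `X`. -/
def imSet (Φ : B ⥤ A) : Set A := {Y : A | ∃ X : B, Nonempty (Φ.obj X ≅ Y)}

section
variable [Preadditive B]

/-- An exact functor `Φ : B → A` is right splitting if `Ker Φ` is right admissible in `B`,
the restriction of `Φ` to `(Ker Φ)^⊥` is fully faithful, and `Im Φ` is right admissible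
in `A`. -/
structure RightSplitting (Φ : B ⥤ A) : Prop where
  ker_radm : RightAdmissible (kerSet Φ)
  full : (incl (rightOrth (kerSet Φ)) ⋙ Φ).Full
  faithful : (incl (rightOrth (kerSet Φ)) ⋙ Φ).Faithful
  im_radm : RightAdmissible (imSet Φ)

/-- An exact functor `Φ : B → A` is left splitting if `Ker Φ` is left admissible in `B`,
the restriction of `Φ` to `^⊥(Ker Φ)` is fully faithful, and `Im Φ` is left admissible
in `A`. -/
structure LeftSplitting (Φ : B ⥤ A) : Prop where
  ker_ladm : LeftAdmissible (kerSet Φ)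
  full : (incl (leftOrth (kerSet Φ)) ⋙ Φ).Full
  faithful : (incl (leftOrth (kerSet Φ)) ⋙ Φ).Faithful
  im_ladm : LeftAdmissible (imSet Φ)

end

end HPD
namespace HPD
open CategoryTheory Limits Pretriangulated

section Aux

variable {B : Type u₁} [Category.{v₁} B] [HasZeroObject B] [Preadditive B]
    [HasShift B ℤ] [∀ n : ℤ, (shiftFunctor B n).Additive] [Pretriangulated B]
    {A : Type u₂} [Category.{v₂} A] [HasZeroObject A] [Preadditive A]
    [HasShift A ℤ] [∀ n : ℤ, (shiftFunctor A n).Additive] [Pretriangulated A]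
    (Φ : B ⥤ A) [Φ.CommShift ℤ] [Φ.IsTriangulated]

lemma kerSet_shift {X : B} (h : X ∈ kerSet Φ) (n : ℤ) : X⟦n⟧ ∈ kerSet Φ :=
  IsZero.of_iso ((shiftFunctor A n).map_isZero h) ((Φ.commShiftIso n).app X)

theorem rightSplitting_isLeftAdjoint (hs : RightSplitting Φ) : Φ.IsLeftAdjoint := by
  classical
  haveI : (incl (kerSet Φ)).IsLeftAdjoint := hs.ker_radm
  haveI := hs.full
  haveI := hs.faithful
  haveI : (incl (imSet Φ)).IsLeftAdjoint := hs.im_radm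
  obtain ⟨r, ⟨adj⟩⟩ := ‹(incl (kerSet Φ)).IsLeftAdjoint›.exists_rightAdjoint
  have tri : ∀ X : B, ∃ (Z : B) (g : X ⟶ Z)
      (h : Z ⟶ ((incl (kerSet Φ)).obj (r.obj X))⟦(1:ℤ)⟧),
      Triangle.mk (adj.counit.app X) g h ∈ distTriang B :=
    fun X => distinguished_cocone_triangle _
  choose Q qg qh mem using tri
  -- injectivity of composition with the counit, for sources in the kernel
  have inj : ∀ {a : B} (ha : a ∈ kerSet Φ) (X : B)
      (v : a ⟶ (incl (kerSet Φ)).obj (r.obj X)),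
      v ≫ adj.counit.app X = 0 → v = 0 := by
    intro a ha X v hv
    have h1 : (adj.homEquiv ⟨a, ha⟩ X).symm (ObjectProperty.homMk v) = (adj.homEquiv ⟨a, ha⟩ X).symm 0 := by
      rw [adj.homEquiv_counit, adj.homEquiv_counit]
      simpa using hv
    simpa using congrArg (fun g => g.hom) ((adj.homEquiv _ _).symm.injective h1)
  have injS : ∀ {a : B} (ha : a ∈ kerSet Φ) (X : B)
      (u : a ⟶ ((incl (kerSet Φ)).obj (r.obj X))⟦(1:ℤ)⟧),
      u ≫ (adj.counit.app X)⟦(1:ℤ)⟧' = 0 → u = 0 := by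
    intro a ha X u hu
    have e_a : ((shiftFunctor B (1:ℤ)).obj (a⟦(-1:ℤ)⟧)) ≅ a :=
      (shiftEquiv B (1:ℤ)).counitIso.app a
    have hmap : (shiftFunctor B (1:ℤ)).map
        ((shiftFunctor B (1:ℤ)).preimage (e_a.hom ≫ u)) = e_a.hom ≫ u :=
      (shiftFunctor B (1:ℤ)).map_preimage _
    have h0 : (shiftFunctor B (1:ℤ)).preimage (e_a.hom ≫ u) ≫ adj.counit.app X = 0 := by
      apply (shiftFunctor B (1:ℤ)).map_injective
      rw [Functor.map_comp, hmap, Functor.map_zero, Category.assoc, hu, comp_zero]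
    have hz : (shiftFunctor B (1:ℤ)).preimage (e_a.hom ≫ u) = 0 :=
      inj (kerSet_shift Φ ha (-1)) X _ h0
    calc u = e_a.inv ≫ (e_a.hom ≫ u) := by rw [Iso.inv_hom_id_assoc]
      _ = e_a.inv ≫ (shiftFunctor B (1:ℤ)).map
            ((shiftFunctor B (1:ℤ)).preimage (e_a.hom ≫ u)) := by rw [hmap]
      _ = 0 := by rw [hz, Functor.map_zero, comp_zero]
  -- surjectivity of composition with the counit, for sources in the kernel
  have surj : ∀ {a : B} (ha : a ∈ kerSet Φ) (X : B) (w : a ⟶ X),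
      ∃ v : a ⟶ (incl (kerSet Φ)).obj (r.obj X), w = v ≫ adj.counit.app X := by
    intro a ha X w
    exact ⟨(incl (kerSet Φ)).map (adj.homEquiv ⟨a, ha⟩ X w),
      ((adj.homEquiv ⟨a, ha⟩ X).symm_apply_apply w).symm.trans (adj.homEquiv_counit _ _ _)⟩
  -- the cone belongs to the right orthogonal
  have memQ : ∀ X : B, Q X ∈ rightOrth (kerSet Φ) := by
    intro X a ha f
    have h31 : qh X ≫ (adj.counit.app X)⟦(1:ℤ)⟧' = 0 :=
      comp_distTriang_mor_zero₃₁ _ (mem X)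
    have h1 : (f ≫ qh X) ≫ (adj.counit.app X)⟦(1:ℤ)⟧' = 0 := by
      rw [Category.assoc, h31, comp_zero]
    have h2 : f ≫ qh X = 0 := injS ha X _ h1
    obtain ⟨g', hg'⟩ := Triangle.coyoneda_exact₃ _ (mem X) f h2
    obtain ⟨v, hv⟩ := surj ha X g'
    have h12 : adj.counit.app X ≫ qg X = 0 := comp_distTriang_mor_zero₁₂ _ (mem X)
    calc f = g' ≫ qg X := hg'
      _ = (v ≫ adj.counit.app X) ≫ qg X := by rw [← hv]; rfl
      _ = v ≫ (adj.counit.app X ≫ qg X) := by rw [Category.assoc]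
      _ = 0 := by rw [h12, comp_zero]
  -- the key bijection
  have bij : ∀ (X : B) (T : ObjectProperty.FullSubcategory (fun Y : B => Y ∈ rightOrth (kerSet Φ))),
      Function.Bijective (fun f : Q X ⟶ T.obj => qg X ≫ f) := by
    intro X T
    constructor
    · intro f₁ f₂ hf
      have hd : qg X ≫ (f₁ - f₂) = 0 := by
        rw [Preadditive.comp_sub, sub_eq_zero]; exact hf
      obtain ⟨k, hk⟩ := Triangle.yoneda_exact₃ _ (mem X) (f₁ - f₂) hd
      have hk0 : k = 0 := T.property _ (kerSet_shift Φ (r.obj X).property 1) k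
      rw [← sub_eq_zero, hk, hk0, comp_zero]; rfl
    · intro u
      have h0 : adj.counit.app X ≫ u = 0 := T.property _ (r.obj X).property _
      obtain ⟨f, hf⟩ := Triangle.yoneda_exact₂ _ (mem X) u h0
      exact ⟨f, hf.symm⟩
  let e : ∀ (X : B) (T : ObjectProperty.FullSubcategory (fun Y : B => Y ∈ rightOrth (kerSet Φ))),
      ((⟨Q X, memQ X⟩ : ObjectProperty.FullSubcategory (fun Y : B => Y ∈ rightOrth (kerSet Φ))) ⟶ T) ≃
        (X ⟶ (incl (rightOrth (kerSet Φ))).obj T) :=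
    fun X T => (ObjectProperty.fullyFaithfulι _).homEquiv.trans (Equiv.ofBijective _ (bij X T))
  have he : ∀ (X : B) T T' (g' : T ⟶ T') (h' : _),
      e X T' (h' ≫ g') = e X T h' ≫ (incl (rightOrth (kerSet Φ))).map g' :=
    fun X T T' g' h' => (Category.assoc _ _ _).symm
  let π := Adjunction.leftAdjointOfEquiv e he
  let adjπ : π ⊣ incl (rightOrth (kerSet Φ)) := Adjunction.adjunctionOfEquivLeft e he
  have hunit : ∀ X : B, adjπ.unit.app X = qg X := by
    intro X
    simp only [adjπ, Adjunction.adjunctionOfEquivLeft, Adjunction.mkOfHomEquiv_unit_app,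
      Equiv.coe_fn_mk, Equiv.ofBijective_apply, e]
    exact Category.comp_id _
  have isoU : ∀ X : B, IsIso (Φ.map (adjπ.unit.app X)) := by
    intro X
    rw [hunit]
    have hd := Φ.map_distinguished _ (mem X)
    have hz : IsZero ((Φ.mapTriangle.obj
        (Triangle.mk (adj.counit.app X) (qg X) (qh X))).obj₁) := (r.obj X).property
    exact (Triangle.isZero₁_iff_isIso₂ _ hd).1 hz
  let α : Φ ≅ π ⋙ (incl (rightOrth (kerSet Φ)) ⋙ Φ) :=
    NatIso.ofComponents (fun X => @asIso _ _ _ _ _ (isoU X)) (by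
      intro X Y f
      dsimp
      rw [← Φ.map_comp, ← Φ.map_comp]
      congr 1
      exact adjπ.unit.naturality f)
  let L := ObjectProperty.lift (fun Y : A => Y ∈ imSet Φ)
      (incl (rightOrth (kerSet Φ)) ⋙ Φ) (fun T => ⟨T.obj, ⟨Iso.refl _⟩⟩)
  haveI : L.Full := by
    haveI : (L ⋙ incl (imSet Φ)).Full := hs.full
    exact Functor.Full.of_comp_faithful (F := L) (G := incl (imSet Φ))
  haveI : L.Faithful := by
    haveI : (L ⋙ incl (imSet Φ)).Faithful := hs.faithful
    exact Functor.Faithful.of_comp (F := L) (G := incl (imSet Φ))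
  haveI : L.EssSurj := by
    constructor
    intro Y
    obtain ⟨X, ⟨iso⟩⟩ := Y.property
    exact ⟨π.obj X, ⟨(ObjectProperty.ι _).preimageIso ((α.app X).symm ≪≫ iso)⟩⟩
  haveI : L.IsEquivalence := {}
  haveI : L.IsLeftAdjoint := L.asEquivalence.isLeftAdjoint_functor
  haveI : π.IsLeftAdjoint := adjπ.isLeftAdjoint
  haveI : (incl (rightOrth (kerSet Φ)) ⋙ Φ).IsLeftAdjoint :=
    inferInstanceAs ((L ⋙ incl (imSet Φ)).IsLeftAdjoint)
  haveI : (π ⋙ (incl (rightOrth (kerSet Φ)) ⋙ Φ)).IsLeftAdjoint := inferInstance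
  exact Functor.isLeftAdjoint_of_iso α.symm

theorem leftSplitting_isRightAdjoint (hs : LeftSplitting Φ) : Φ.IsRightAdjoint := by
  classical
  haveI : (incl (kerSet Φ)).IsRightAdjoint := hs.ker_ladm
  haveI := hs.full
  haveI := hs.faithful
  haveI : (incl (imSet Φ)).IsRightAdjoint := hs.im_ladm
  obtain ⟨l, ⟨adj⟩⟩ := ‹(incl (kerSet Φ)).IsRightAdjoint›.exists_leftAdjoint
  have tri : ∀ X : B, ∃ (Z : B) (f : Z ⟶ X)
      (h : (incl (kerSet Φ)).obj (l.obj X) ⟶ Z⟦(1:ℤ)⟧),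
      Triangle.mk f (adj.unit.app X) h ∈ distTriang B :=
    fun X => distinguished_cocone_triangle₁ _
  choose Q qf qh mem using tri
  -- injectivity of precomposition with the unit, for targets in the kernel
  have inj : ∀ {a : B} (ha : a ∈ kerSet Φ) (X : B)
      (t : (incl (kerSet Φ)).obj (l.obj X) ⟶ a),
      adj.unit.app X ≫ t = 0 → t = 0 := by
    intro a ha X t ht
    have h1 : adj.homEquiv X (⟨a, ha⟩ : ObjectProperty.FullSubcategory (fun Y : B => Y ∈ kerSet Φ)) (ObjectProperty.homMk t) =
        adj.homEquiv X ⟨a, ha⟩ 0 := by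
      rw [adj.homEquiv_unit, adj.homEquiv_unit]
      simpa using ht
    simpa using congrArg (fun g => g.hom) ((adj.homEquiv _ _).injective h1)
  have injS : ∀ {a : B} (ha : a ∈ kerSet Φ) (X : B)
      (t : ((incl (kerSet Φ)).obj (l.obj X))⟦(-1:ℤ)⟧ ⟶ a),
      (adj.unit.app X)⟦(-1:ℤ)⟧' ≫ t = 0 → t = 0 := by
    intro a ha X t ht
    have e_a : ((shiftFunctor B (-1:ℤ)).obj (a⟦(1:ℤ)⟧)) ≅ a :=
      (shiftEquiv B (-1:ℤ)).counitIso.app a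
    have hmap : (shiftFunctor B (-1:ℤ)).map
        ((shiftFunctor B (-1:ℤ)).preimage (t ≫ e_a.inv)) = t ≫ e_a.inv :=
      (shiftFunctor B (-1:ℤ)).map_preimage _
    have h0 : adj.unit.app X ≫ (shiftFunctor B (-1:ℤ)).preimage (t ≫ e_a.inv) = 0 := by
      apply (shiftFunctor B (-1:ℤ)).map_injective
      rw [Functor.map_comp, hmap, Functor.map_zero, ← Category.assoc, ht, zero_comp]
    have hz : (shiftFunctor B (-1:ℤ)).preimage (t ≫ e_a.inv) = 0 :=
      inj (kerSet_shift Φ ha 1) X _ h0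
    calc t = (t ≫ e_a.inv) ≫ e_a.hom := by rw [Category.assoc, Iso.inv_hom_id, Category.comp_id]
      _ = (shiftFunctor B (-1:ℤ)).map
            ((shiftFunctor B (-1:ℤ)).preimage (t ≫ e_a.inv)) ≫ e_a.hom := by rw [hmap]
      _ = 0 := by rw [hz, Functor.map_zero, zero_comp]
  -- surjectivity of precomposition with the unit, for targets in the kernel
  have surj : ∀ {a : B} (ha : a ∈ kerSet Φ) (X : B) (w : X ⟶ a),
      ∃ v : (incl (kerSet Φ)).obj (l.obj X) ⟶ a, w = adj.unit.app X ≫ v := by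
    intro a ha X w
    exact ⟨(incl (kerSet Φ)).map ((adj.homEquiv X ⟨a, ha⟩).symm w),
      ((adj.homEquiv X ⟨a, ha⟩).apply_symm_apply w).symm.trans (adj.homEquiv_unit _ _ _)⟩
  -- the cocone belongs to the left orthogonal
  have memQ : ∀ X : B, Q X ∈ leftOrth (kerSet Φ) := by
    intro X a ha u
    have hm : (adj.unit.app X)⟦(-1:ℤ)⟧' ≫ (Triangle.mk (qf X) (adj.unit.app X)
        (qh X)).invRotate.mor₁ = 0 := by
      have h23 : adj.unit.app X ≫ qh X = 0 := comp_distTriang_mor_zero₂₃ _ (mem X)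
      exact (Preadditive.comp_neg _ _).trans (neg_eq_zero.mpr ((Category.assoc _ _ _).symm.trans
        ((congrArg (· ≫ _) ((Functor.map_comp ..).symm.trans ((congrArg _ h23).trans
        (Functor.map_zero ..)))).trans zero_comp)))
    have h1 : (Triangle.mk (qf X) (adj.unit.app X) (qh X)).invRotate.mor₁ ≫ u = 0 := by
      apply injS ha X
      exact (Category.assoc _ _ _).symm.trans ((congrArg (· ≫ u) hm).trans zero_comp)
    obtain ⟨g', hg'⟩ := Triangle.yoneda_exact₂ _ (inv_rot_of_distTriang _ (mem X)) u h1
    obtain ⟨v, hv⟩ := surj ha X g'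
    have h12 : qf X ≫ adj.unit.app X = 0 := comp_distTriang_mor_zero₁₂ _ (mem X)
    calc u = qf X ≫ g' := hg'
      _ = qf X ≫ (adj.unit.app X ≫ v) := by rw [← hv]
      _ = (qf X ≫ adj.unit.app X) ≫ v := by rw [Category.assoc]
      _ = 0 := by rw [h12, zero_comp]
  -- the key bijection
  have bij : ∀ (T : ObjectProperty.FullSubcategory (fun Y : B => Y ∈ leftOrth (kerSet Φ))) (X : B),
      Function.Bijective (fun t : T.obj ⟶ Q X => t ≫ qf X) := by
    intro T X
    constructor
    · intro t₁ t₂ ht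
      have hd : (t₁ - t₂) ≫ qf X = 0 := by
        rw [Preadditive.sub_comp, sub_eq_zero]; exact ht
      have hd' : (t₁ - t₂) ≫ (Triangle.mk (qf X) (adj.unit.app X) (qh X)).invRotate.mor₂
          = 0 := hd
      obtain ⟨k, hk⟩ := Triangle.coyoneda_exact₂ _ (inv_rot_of_distTriang _ (mem X))
        (t₁ - t₂) hd'
      have hk0 : k = 0 := T.property _ (kerSet_shift Φ (l.obj X).property (-1)) k
      rw [← sub_eq_zero, hk, hk0, zero_comp]; rfl
    · intro w
      have h0 : w ≫ adj.unit.app X = 0 := T.property _ (l.obj X).property _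
      obtain ⟨t, ht⟩ := Triangle.coyoneda_exact₂ _ (mem X) w h0
      exact ⟨t, ht.symm⟩
  let e : ∀ (T : ObjectProperty.FullSubcategory (fun Y : B => Y ∈ leftOrth (kerSet Φ))) (X : B),
      ((incl (leftOrth (kerSet Φ))).obj T ⟶ X) ≃
        (T ⟶ (⟨Q X, memQ X⟩ : ObjectProperty.FullSubcategory (fun Y : B => Y ∈ leftOrth (kerSet Φ)))) :=
    fun T X => ((ObjectProperty.fullyFaithfulι _).homEquiv.trans (Equiv.ofBijective _ (bij T X))).symm
  have he : ∀ (T' T : ObjectProperty.FullSubcategory (fun Y : B => Y ∈ leftOrth (kerSet Φ))) (X : B)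
      (f : T' ⟶ T) (g : (incl (leftOrth (kerSet Φ))).obj T ⟶ X),
      e T' X ((incl (leftOrth (kerSet Φ))).map f ≫ g) = f ≫ e T X g := by
    intro T' T X f g
    apply (e T' X).symm.injective
    rw [Equiv.symm_apply_apply]
    have h2 : (e T X).symm (e T X g) = g := Equiv.symm_apply_apply _ _
    exact (congrArg (fun k => (incl (leftOrth (kerSet Φ))).map f ≫ k) h2).symm.trans
      (Category.assoc _ _ _).symm
  let ρ := Adjunction.rightAdjointOfEquiv e he
  let adjρ : incl (leftOrth (kerSet Φ)) ⊣ ρ := Adjunction.adjunctionOfEquivRight e he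
  have hcounit : ∀ X : B, adjρ.counit.app X = qf X := by
    intro X
    simp only [adjρ, Adjunction.adjunctionOfEquivRight, Adjunction.mkOfHomEquiv_counit_app,
      Equiv.coe_fn_mk, Equiv.symm_symm, Equiv.ofBijective_apply, e]
    exact Category.id_comp _
  have isoC : ∀ X : B, IsIso (Φ.map (adjρ.counit.app X)) := by
    intro X
    rw [hcounit]
    have hd := Φ.map_distinguished _ (mem X)
    have hz : IsZero ((Φ.mapTriangle.obj
        (Triangle.mk (qf X) (adj.unit.app X) (qh X))).obj₃) := (l.obj X).property
    exact (Triangle.isZero₃_iff_isIso₁ _ hd).1 hz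
  let α : ρ ⋙ (incl (leftOrth (kerSet Φ)) ⋙ Φ) ≅ Φ :=
    NatIso.ofComponents (fun X => @asIso _ _ _ _ _ (isoC X)) (by
      intro X Y f
      dsimp
      rw [← Φ.map_comp, ← Φ.map_comp]
      congr 1
      exact adjρ.counit.naturality f)
  let L := ObjectProperty.lift (fun Y : A => Y ∈ imSet Φ)
      (incl (leftOrth (kerSet Φ)) ⋙ Φ) (fun T => ⟨T.obj, ⟨Iso.refl _⟩⟩)
  haveI : L.Full := by
    haveI : (L ⋙ incl (imSet Φ)).Full := hs.full
    exact Functor.Full.of_comp_faithful (F := L) (G := incl (imSet Φ))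
  haveI : L.Faithful := by
    haveI : (L ⋙ incl (imSet Φ)).Faithful := hs.faithful
    exact Functor.Faithful.of_comp (F := L) (G := incl (imSet Φ))
  haveI : L.EssSurj := by
    constructor
    intro Y
    obtain ⟨X, ⟨iso⟩⟩ := Y.property
    exact ⟨ρ.obj X, ⟨(ObjectProperty.ι _).preimageIso ((α.app X) ≪≫ iso)⟩⟩
  haveI : L.IsEquivalence := {}
  haveI : L.IsRightAdjoint := L.asEquivalence.isRightAdjoint_functor
  haveI : ρ.IsRightAdjoint := adjρ.isRightAdjoint
  haveI : (incl (leftOrth (kerSet Φ)) ⋙ Φ).IsRightAdjoint :=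
    inferInstanceAs ((L ⋙ incl (imSet Φ)).IsRightAdjoint)
  haveI : (ρ ⋙ (incl (leftOrth (kerSet Φ)) ⋙ Φ)).IsRightAdjoint := inferInstance
  exact Functor.isRightAdjoint_of_iso α

end Aux

/-- A right (resp. left) splitting exact functor between triangulated categories admits a
right (resp. left) adjoint. -/
theorem statement_9 {B : Type u₁} [Category.{v₁} B] [HasZeroObject B] [Preadditive B]
    [HasShift B ℤ] [∀ n : ℤ, (shiftFunctor B n).Additive] [Pretriangulated B]
    {A : Type u₂} [Category.{v₂} A] [HasZeroObject A] [Preadditive A]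
    [HasShift A ℤ] [∀ n : ℤ, (shiftFunctor A n).Additive] [Pretriangulated A]
    (Φ : B ⥤ A) [Φ.CommShift ℤ] [Φ.IsTriangulated] :
    (RightSplitting Φ → Φ.IsLeftAdjoint) ∧ (LeftSplitting Φ → Φ.IsRightAdjoint) :=
  ⟨fun hs => rightSplitting_isLeftAdjoint Φ hs, fun hs => leftSplitting_isRightAdjoint Φ hs⟩

end HPD
end

section
/- If Φ : B → A is a right (respectively, left) splitting exact functor between triangulated categories and Ψ : A → B is its right (respectively, left) adjoint, then Ψ is a left (respectively, right) splitting functor. -/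
namespace HPD
open CategoryTheory Limits Pretriangulated



section GeneralHelpers

variable {C : Type*} [Category C]

lemma isIso_of_postcomp_bijective {X Y : C} {f : X ⟶ Y}
    (h : ∀ W : C, Function.Bijective fun (g : W ⟶ X) => g ≫ f) : IsIso f := by
  obtain ⟨g, hg⟩ := (h Y).2 (𝟙 Y)
  have hg' : g ≫ f = 𝟙 Y := hg
  refine ⟨g, ?_, hg'⟩
  apply (h X).1
  show (f ≫ g) ≫ f = 𝟙 X ≫ f
  rw [Category.assoc, hg', Category.comp_id, Category.id_comp]

lemma isIso_of_precomp_bijective {X Y : C} {f : X ⟶ Y}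
    (h : ∀ W : C, Function.Bijective fun (g : Y ⟶ W) => f ≫ g) : IsIso f := by
  obtain ⟨g, hg⟩ := (h X).2 (𝟙 X)
  have hg' : f ≫ g = 𝟙 X := hg
  refine ⟨g, hg', ?_⟩
  apply (h Y).1
  show f ≫ g ≫ f = f ≫ 𝟙 Y
  rw [← Category.assoc, hg', Category.comp_id, Category.id_comp]

/-- Morphisms in a full subcategory identify with morphisms in the ambient category. -/
def fullSubHomEquiv {P : ObjectProperty C} {X Y : P.FullSubcategory} :
    (X ⟶ Y) ≃ (X.obj ⟶ Y.obj) :=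
  ⟨fun f => f.hom, ObjectProperty.homMk, fun _ => rfl, fun _ => rfl⟩

end GeneralHelpers

section OrthHelpers

variable {C : Type*} [Category C] [Preadditive C]

lemma rightOrth_isoClosed {S : Set C} {X Y : C} (e : X ≅ Y) (hX : X ∈ rightOrth S) :
    Y ∈ rightOrth S := by
  intro a ha f
  have h1 : f ≫ e.inv = 0 := hX a ha (f ≫ e.inv)
  calc f = (f ≫ e.inv) ≫ e.hom := by simp
  _ = 0 := by rw [h1, Limits.zero_comp]

lemma leftOrth_isoClosed {S : Set C} {X Y : C} (e : X ≅ Y) (hX : X ∈ leftOrth S) :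
    Y ∈ leftOrth S := by
  intro a ha f
  have h1 : e.hom ≫ f = 0 := hX a ha (e.hom ≫ f)
  calc f = e.inv ≫ (e.hom ≫ f) := by simp
  _ = 0 := by rw [h1, Limits.comp_zero]

end OrthHelpers

section TriHelpers

variable {C : Type*} [Category C] [HasZeroObject C] [Preadditive C] [HasShift C ℤ]
  [∀ n : ℤ, (shiftFunctor C n).Additive] [Pretriangulated C]

lemma rightOrth_shiftClosed {S : Set C} (hS : ∀ X ∈ S, ∀ n : ℤ, (X⟦n⟧ : C) ∈ S) :
    ∀ X ∈ rightOrth S, ∀ n : ℤ, (X⟦n⟧ : C) ∈ rightOrth S := by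
  intro X hX n a ha f
  obtain ⟨f', hf'⟩ := (shiftFunctor C n).map_surjective
    ((shiftFunctorCompIsoId C (-n) n (by ring)).hom.app a ≫ f)
  have h0 : f' = 0 := hX _ (hS a ha (-n)) f'
  have : (shiftFunctorCompIsoId C (-n) n (by ring)).hom.app a ≫ f = 0 := by
    rw [← hf', h0, Functor.map_zero]
  calc f = (shiftFunctorCompIsoId C (-n) n (by ring)).inv.app a ≫
        ((shiftFunctorCompIsoId C (-n) n (by ring)).hom.app a ≫ f) := by simp
  _ = 0 := by rw [this, Limits.comp_zero]

lemma leftOrth_shiftClosed {S : Set C} (hS : ∀ X ∈ S, ∀ n : ℤ, (X⟦n⟧ : C) ∈ S) :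
    ∀ X ∈ leftOrth S, ∀ n : ℤ, (X⟦n⟧ : C) ∈ leftOrth S := by
  intro X hX n a ha f
  obtain ⟨f', hf'⟩ := (shiftFunctor C n).map_surjective
    (f ≫ (shiftFunctorCompIsoId C (-n) n (by ring)).inv.app a)
  have h0 : f' = 0 := hX _ (hS a ha (-n)) f'
  have : f ≫ (shiftFunctorCompIsoId C (-n) n (by ring)).inv.app a = 0 := by
    rw [← hf', h0, Functor.map_zero]
  calc f = (f ≫ (shiftFunctorCompIsoId C (-n) n (by ring)).inv.app a) ≫
        (shiftFunctorCompIsoId C (-n) n (by ring)).hom.app a := by simp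
  _ = 0 := by rw [this, Limits.zero_comp]

lemma isIso_mor₂_of_isZero_obj₁ {T : Triangle C} (hT : T ∈ distTriang C)
    (h1 : IsZero T.obj₁) : IsIso T.mor₂ := by
  apply isIso_of_postcomp_bijective
  intro W
  constructor
  · intro u v huv
    have hsub : (u - v) ≫ T.mor₂ = 0 := by
      have huv' : u ≫ T.mor₂ = v ≫ T.mor₂ := huv
      rw [Preadditive.sub_comp, huv', sub_self]
    obtain ⟨z, hz⟩ := Triangle.coyoneda_exact₂ _ hT (u - v) hsub
    have hz0 : z = 0 := h1.eq_of_tgt z 0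
    rw [hz0, Limits.zero_comp] at hz
    exact sub_eq_zero.1 hz
  · intro v
    have hz : v ≫ T.mor₃ = 0 := by
      apply (Limits.IsZero.eq_of_tgt ?_ _ _)
      exact (shiftFunctor C (1 : ℤ)).map_isZero h1
    obtain ⟨u, hu⟩ := Triangle.coyoneda_exact₃ _ hT v hz
    exact ⟨u, hu.symm⟩

lemma isIso_mor₁_of_isZero_obj₃ {T : Triangle C} (hT : T ∈ distTriang C)
    (h3 : IsZero T.obj₃) : IsIso T.mor₁ := by
  apply isIso_of_postcomp_bijective
  intro W
  constructor
  · intro u v huv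
    have hsub : (u - v) ≫ T.invRotate.mor₂ = 0 := by
      show (u - v) ≫ T.mor₁ = 0
      have huv' : u ≫ T.mor₁ = v ≫ T.mor₁ := huv
      rw [Preadditive.sub_comp, huv', sub_self]
    obtain ⟨z, hz⟩ := Triangle.coyoneda_exact₂ _ (inv_rot_of_distTriang _ hT) (u - v) hsub
    have hz0 : z = 0 := by
      apply Limits.IsZero.eq_of_tgt
      exact (shiftFunctor C (-1 : ℤ)).map_isZero h3
    rw [hz0, Limits.zero_comp] at hz
    exact sub_eq_zero.1 hz
  · intro v
    have hz : v ≫ T.mor₂ = 0 := h3.eq_of_tgt _ _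
    obtain ⟨u, hu⟩ := Triangle.coyoneda_exact₂ _ hT v hz
    exact ⟨u, hu.symm⟩

end TriHelpers




section RightAdm

variable {C : Type*} [Category C] [HasZeroObject C] [Preadditive C] [HasShift C ℤ]
  [∀ n : ℤ, (shiftFunctor C n).Additive] [Pretriangulated C]

variable {S : Set C} {R : C ⥤ ObjectProperty.FullSubcategory (fun X : C => X ∈ S)}

lemma counit_precomp_bijective (adjS : incl S ⊣ R) {a : C} (ha : a ∈ S) (T : C) :
    Function.Bijective (fun v : a ⟶ (incl S).obj (R.obj T) => v ≫ adjS.counit.app T) := by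
  have he : (fun v : a ⟶ (incl S).obj (R.obj T) => v ≫ adjS.counit.app T)
      = fun v => (adjS.homEquiv ⟨a, ha⟩ T).symm (ObjectProperty.homMk v) := by
    funext v
    rw [Adjunction.homEquiv_counit]
    rfl
  rw [he]
  exact (adjS.homEquiv ⟨a, ha⟩ T).symm.bijective.comp fullSubHomEquiv.symm.bijective

lemma counit_comp_shift_injective (adjS : incl S ⊣ R)
    (hS : ∀ X ∈ S, ∀ n : ℤ, (X⟦n⟧ : C) ∈ S) {a : C} (ha : a ∈ S) (T : C)
    {m : a ⟶ ((incl S).obj (R.obj T))⟦(1:ℤ)⟧}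
    (h0 : m ≫ (adjS.counit.app T)⟦(1:ℤ)⟧' = 0) : m = 0 := by
  set κ := shiftFunctorCompIsoId C (-1 : ℤ) (1 : ℤ) (by ring) with hκ
  obtain ⟨m', hm'⟩ := (shiftFunctor C (1:ℤ)).map_surjective (κ.hom.app a ≫ m)
  have h1 : m' ≫ adjS.counit.app T = 0 := by
    apply (shiftFunctor C (1:ℤ)).map_injective
    rw [Functor.map_comp, hm', Functor.map_zero, Category.assoc, h0, Limits.comp_zero]
  have h2 : m' = 0 := by
    apply (counit_precomp_bijective adjS (hS a ha (-1)) T).1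
    show m' ≫ adjS.counit.app T = (0 : a⟦(-1:ℤ)⟧ ⟶ _) ≫ adjS.counit.app T
    rw [h1, Limits.zero_comp]
  calc m = κ.inv.app a ≫ (κ.hom.app a ≫ m) := by simp
  _ = 0 := by rw [← hm', h2, Functor.map_zero, Limits.comp_zero]

lemma cone_counit_mem_rightOrth (adjS : incl S ⊣ R)
    (hS : ∀ X ∈ S, ∀ n : ℤ, (X⟦n⟧ : C) ∈ S) {T Z : C} {g : T ⟶ Z}
    {h : Z ⟶ ((incl S).obj (R.obj T))⟦(1:ℤ)⟧}
    (dist : Triangle.mk (adjS.counit.app T) g h ∈ distTriang C) : Z ∈ rightOrth S := by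
  intro a ha f
  have hfh : f ≫ h = 0 := by
    apply counit_comp_shift_injective adjS hS ha T
    rw [Category.assoc]
    have h31 := comp_distTriang_mor_zero₃₁ _ dist
    dsimp at h31
    rw [show h ≫ (adjS.counit.app T)⟦(1:ℤ)⟧' = 0 from h31, Limits.comp_zero]
  obtain ⟨z, hz⟩ := Triangle.coyoneda_exact₂ _ (rot_of_distTriang _ dist) f hfh
  obtain ⟨w, hw⟩ := (counit_precomp_bijective adjS ha T).2 z
  dsimp at hz
  have h12 := comp_distTriang_mor_zero₁₂ _ dist
  dsimp at h12
  rw [hz, ← hw]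
  show (w ≫ adjS.counit.app T) ≫ g = 0
  rw [Category.assoc, show adjS.counit.app T ≫ g = 0 from h12, Limits.comp_zero]

lemma cone_counit_precomp_bijective (adjS : incl S ⊣ R)
    (hS : ∀ X ∈ S, ∀ n : ℤ, (X⟦n⟧ : C) ∈ S) {T Z : C} {g : T ⟶ Z}
    {h : Z ⟶ ((incl S).obj (R.obj T))⟦(1:ℤ)⟧}
    (dist : Triangle.mk (adjS.counit.app T) g h ∈ distTriang C)
    {k : C} (hk : k ∈ rightOrth S) :
    Function.Bijective (fun u : Z ⟶ k => g ≫ u) := by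
  constructor
  · intro u v huv
    have hsub : g ≫ (u - v) = 0 := by
      have huv' : g ≫ u = g ≫ v := huv
      rw [Preadditive.comp_sub, huv', sub_self]
    obtain ⟨w, hw⟩ := Triangle.yoneda_exact₂ _ (rot_of_distTriang _ dist) (u - v) hsub
    have hw0 : w = 0 := hk _ (hS _ (R.obj T).property 1) w
    rw [hw0, Limits.comp_zero] at hw
    exact sub_eq_zero.1 hw
  · intro v
    have h0 : adjS.counit.app T ≫ v = 0 :=
      hk ((incl S).obj (R.obj T)) (R.obj T).property _
    obtain ⟨u, hu⟩ := Triangle.yoneda_exact₂ _ dist v h0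
    exact ⟨u, hu.symm⟩

lemma leftAdmissible_rightOrth {S : Set C} (hS : ∀ X ∈ S, ∀ n : ℤ, (X⟦n⟧ : C) ∈ S)
    (hadm : RightAdmissible S) : LeftAdmissible (rightOrth S) := by
  obtain ⟨R, ⟨adjS⟩⟩ := hadm.exists_rightAdjoint
  have hc : ∀ T : C, ∃ (Z : C) (g : T ⟶ Z) (h : Z ⟶ ((incl S).obj (R.obj T))⟦(1:ℤ)⟧),
      Triangle.mk (adjS.counit.app T) g h ∈ distTriang C := fun T =>
    distinguished_cocone_triangle _
  choose Z g h dist using hc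
  let Fobj : C → ObjectProperty.FullSubcategory (fun X : C => X ∈ rightOrth S) := fun T =>
    ⟨Z T, cone_counit_mem_rightOrth adjS hS (dist T)⟩
  let e : ∀ (T : C) (k : ObjectProperty.FullSubcategory (fun X : C => X ∈ rightOrth S)),
      (Fobj T ⟶ k) ≃ (T ⟶ (incl (rightOrth S)).obj k) := fun T k =>
    fullSubHomEquiv.trans (Equiv.ofBijective (fun u => g T ≫ u)
      (cone_counit_precomp_bijective adjS hS (dist T) k.property))
  have he : ∀ (X : C) (Y Y' : ObjectProperty.FullSubcategory (fun X : C => X ∈ rightOrth S))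
      (g' : Y ⟶ Y') (h' : Fobj X ⟶ Y),
      e X Y' (h' ≫ g') = e X Y h' ≫ (incl (rightOrth S)).map g' := by
    intro X Y Y' g' h'
    show g X ≫ (h'.hom ≫ g'.hom) = (g X ≫ h'.hom) ≫ g'.hom
    rw [Category.assoc]
  exact ⟨⟨Adjunction.leftAdjointOfEquiv e he, ⟨Adjunction.adjunctionOfEquivLeft e he⟩⟩⟩

end RightAdm

section LeftAdm

variable {C : Type*} [Category C] [HasZeroObject C] [Preadditive C] [HasShift C ℤ]
  [∀ n : ℤ, (shiftFunctor C n).Additive] [Pretriangulated C]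

variable {S : Set C} {L : C ⥤ ObjectProperty.FullSubcategory (fun X : C => X ∈ S)}

lemma unit_postcomp_bijective (adjS : L ⊣ incl S) {a : C} (ha : a ∈ S) (T : C) :
    Function.Bijective (fun v : (incl S).obj (L.obj T) ⟶ a => adjS.unit.app T ≫ v) := by
  have he : (fun v : (incl S).obj (L.obj T) ⟶ a => adjS.unit.app T ≫ v)
      = fun v => adjS.homEquiv T ⟨a, ha⟩ (ObjectProperty.homMk v) := by
    funext v
    rw [Adjunction.homEquiv_unit]
    rfl
  rw [he]
  exact (adjS.homEquiv T ⟨a, ha⟩).bijective.comp fullSubHomEquiv.symm.bijective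

lemma shift_unit_precomp_injective (adjS : L ⊣ incl S)
    (hS : ∀ X ∈ S, ∀ n : ℤ, (X⟦n⟧ : C) ∈ S) {a : C} (ha : a ∈ S) (T : C)
    {m : ((incl S).obj (L.obj T))⟦(-1:ℤ)⟧ ⟶ a}
    (h0 : (adjS.unit.app T)⟦(-1:ℤ)⟧' ≫ m = 0) : m = 0 := by
  set κ := shiftFunctorCompIsoId C (1 : ℤ) (-1 : ℤ) (by ring) with hκ
  obtain ⟨m', hm'⟩ := (shiftFunctor C (-1:ℤ)).map_surjective (m ≫ κ.inv.app a)
  have h1 : adjS.unit.app T ≫ m' = 0 := by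
    apply (shiftFunctor C (-1:ℤ)).map_injective
    rw [Functor.map_comp, hm', Functor.map_zero, ← Category.assoc, h0, Limits.zero_comp]
  have h2 : m' = 0 := by
    apply (unit_postcomp_bijective adjS (hS a ha 1) T).1
    show adjS.unit.app T ≫ m' = adjS.unit.app T ≫ (0 : (incl S).obj (L.obj T) ⟶ a⟦(1:ℤ)⟧)
    rw [h1, Limits.comp_zero]
  calc m = (m ≫ κ.inv.app a) ≫ κ.hom.app a := by simp
  _ = 0 := by rw [← hm', h2, Functor.map_zero, Limits.zero_comp]

lemma cocone_unit_mem_leftOrth (adjS : L ⊣ incl S)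
    (hS : ∀ X ∈ S, ∀ n : ℤ, (X⟦n⟧ : C) ∈ S) {T W : C} {f : W ⟶ T}
    {h : ((incl S).obj (L.obj T)) ⟶ W⟦(1:ℤ)⟧}
    (dist : Triangle.mk f (adjS.unit.app T) h ∈ distTriang C) : W ∈ leftOrth S := by
  intro a ha v
  have hkey : (adjS.unit.app T)⟦(-1:ℤ)⟧' ≫ (Triangle.mk f (adjS.unit.app T) h).invRotate.mor₁
      = 0 := by
    show (adjS.unit.app T)⟦(-1:ℤ)⟧' ≫ (-(h⟦(-1:ℤ)⟧' ≫ (shiftFunctorCompIsoId C (1:ℤ) (-1) (by ring)).hom.app W)) = 0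
    rw [Preadditive.comp_neg, ← Functor.map_comp_assoc]
    have h23 := comp_distTriang_mor_zero₂₃ _ dist
    dsimp at h23
    rw [show adjS.unit.app T ≫ h = 0 from h23, Functor.map_zero, Limits.zero_comp, neg_zero]
  have hrv : (Triangle.mk f (adjS.unit.app T) h).invRotate.mor₁ ≫ v = 0 := by
    apply shift_unit_precomp_injective adjS hS ha T
    calc _ = ((adjS.unit.app T)⟦(-1:ℤ)⟧' ≫ (Triangle.mk f (adjS.unit.app T) h).invRotate.mor₁) ≫ v :=
          (Category.assoc _ _ _).symm
    _ = 0 := by rw [hkey]; exact Limits.zero_comp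
  obtain ⟨u, hu⟩ := Triangle.yoneda_exact₂ _ (inv_rot_of_distTriang _ dist) v hrv
  obtain ⟨u', hu'⟩ := (unit_postcomp_bijective adjS ha T).2 u
  dsimp at hu
  have h12 := comp_distTriang_mor_zero₁₂ _ dist
  dsimp at h12
  rw [hu, ← hu']
  show f ≫ (adjS.unit.app T ≫ u') = 0
  rw [← Category.assoc, show f ≫ adjS.unit.app T = 0 from h12, Limits.zero_comp]

lemma cocone_unit_postcomp_bijective (adjS : L ⊣ incl S)
    (hS : ∀ X ∈ S, ∀ n : ℤ, (X⟦n⟧ : C) ∈ S) {T W : C} {f : W ⟶ T}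
    {h : ((incl S).obj (L.obj T)) ⟶ W⟦(1:ℤ)⟧}
    (dist : Triangle.mk f (adjS.unit.app T) h ∈ distTriang C)
    {k : C} (hk : k ∈ leftOrth S) :
    Function.Bijective (fun u : k ⟶ W => u ≫ f) := by
  constructor
  · intro u v huv
    have hsub : (u - v) ≫ (Triangle.mk f (adjS.unit.app T) h).invRotate.mor₂ = 0 := by
      show (u - v) ≫ f = 0
      have huv' : u ≫ f = v ≫ f := huv
      rw [Preadditive.sub_comp, huv', sub_self]
    obtain ⟨z, hz⟩ := Triangle.coyoneda_exact₂ _ (inv_rot_of_distTriang _ dist) (u - v) hsub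
    have hz0 : z = 0 := hk _ (hS _ (L.obj T).property (-1)) z
    rw [hz0, Limits.zero_comp] at hz
    exact sub_eq_zero.1 hz
  · intro v
    have h0 : v ≫ adjS.unit.app T = 0 :=
      hk ((incl S).obj (L.obj T)) (L.obj T).property _
    obtain ⟨u, hu⟩ := Triangle.coyoneda_exact₂ _ dist v h0
    exact ⟨u, hu.symm⟩

lemma rightAdmissible_leftOrth {S : Set C} (hS : ∀ X ∈ S, ∀ n : ℤ, (X⟦n⟧ : C) ∈ S)
    (hadm : LeftAdmissible S) : RightAdmissible (leftOrth S) := by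
  obtain ⟨L, ⟨adjS⟩⟩ := hadm.exists_leftAdjoint
  have hc : ∀ T : C, ∃ (W : C) (f : W ⟶ T) (h : ((incl S).obj (L.obj T)) ⟶ W⟦(1:ℤ)⟧),
      Triangle.mk f (adjS.unit.app T) h ∈ distTriang C := fun T =>
    distinguished_cocone_triangle₁ _
  choose W f h dist using hc
  let Gobj : C → ObjectProperty.FullSubcategory (fun X : C => X ∈ leftOrth S) := fun T =>
    ⟨W T, cocone_unit_mem_leftOrth adjS hS (dist T)⟩
  let e : ∀ (k : ObjectProperty.FullSubcategory (fun X : C => X ∈ leftOrth S)) (T : C),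
      ((incl (leftOrth S)).obj k ⟶ T) ≃ (k ⟶ Gobj T) := fun k T =>
    (Equiv.ofBijective (fun u : k.obj ⟶ W T => u ≫ f T)
      (cocone_unit_postcomp_bijective adjS hS (dist T) k.property)).symm.trans
      (fullSubHomEquiv (X := k) (Y := Gobj T)).symm
  have he : ∀ (k' k : ObjectProperty.FullSubcategory (fun X : C => X ∈ leftOrth S)) (T : C)
      (f' : k' ⟶ k) (g : (incl (leftOrth S)).obj k ⟶ T),
      e k' T ((incl (leftOrth S)).map f' ≫ g) = f' ≫ e k T g := by
    intro k' k T f' g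
    apply ObjectProperty.hom_ext
    apply (cocone_unit_postcomp_bijective adjS hS (dist T) k'.property).1
    have h1 : ((Equiv.ofBijective (fun u : k'.obj ⟶ W T => u ≫ f T)
        (cocone_unit_postcomp_bijective adjS hS (dist T) k'.property)).symm
        ((incl (leftOrth S)).map f' ≫ g)) ≫ f T = (incl (leftOrth S)).map f' ≫ g :=
      Equiv.ofBijective_apply_symm_apply (fun u : k'.obj ⟶ W T => u ≫ f T)
        (cocone_unit_postcomp_bijective adjS hS (dist T) k'.property)
        ((incl (leftOrth S)).map f' ≫ g)
    have h2 : ((Equiv.ofBijective (fun u : k.obj ⟶ W T => u ≫ f T)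
        (cocone_unit_postcomp_bijective adjS hS (dist T) k.property)).symm g) ≫ f T = g :=
      Equiv.ofBijective_apply_symm_apply (fun u : k.obj ⟶ W T => u ≫ f T)
        (cocone_unit_postcomp_bijective adjS hS (dist T) k.property) g
    show ((Equiv.ofBijective (fun u : k'.obj ⟶ W T => u ≫ f T)
        (cocone_unit_postcomp_bijective adjS hS (dist T) k'.property)).symm
        ((incl (leftOrth S)).map f' ≫ g)) ≫ f T
      = (f'.hom ≫ (Equiv.ofBijective (fun u : k.obj ⟶ W T => u ≫ f T)
        (cocone_unit_postcomp_bijective adjS hS (dist T) k.property)).symm g) ≫ f T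
    rw [h1, Category.assoc, h2]
    rfl
  exact ⟨⟨Adjunction.rightAdjointOfEquiv e he, ⟨Adjunction.adjunctionOfEquivRight e he⟩⟩⟩

end LeftAdm




section Main

variable {B : Type*} [Category B] [HasZeroObject B] [Preadditive B]
    [HasShift B ℤ] [∀ n : ℤ, (shiftFunctor B n).Additive] [Pretriangulated B]
    {A : Type*} [Category A] [HasZeroObject A] [Preadditive A]
    [HasShift A ℤ] [∀ n : ℤ, (shiftFunctor A n).Additive] [Pretriangulated A]
    (Φ : B ⥤ A) [Φ.CommShift ℤ] [Φ.IsTriangulated]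

lemma kerSet_shiftClosed : ∀ X ∈ kerSet Φ, ∀ n : ℤ, (X⟦n⟧ : B) ∈ kerSet Φ := by
  intro X hX n
  have hX' : IsZero (Φ.obj X) := hX
  show IsZero (Φ.obj (X⟦n⟧))
  exact IsZero.of_iso ((shiftFunctor A n).map_isZero hX') ((Φ.commShiftIso n).app X)

lemma imSet_shiftClosed : ∀ Y ∈ imSet Φ, ∀ n : ℤ, (Y⟦n⟧ : A) ∈ imSet Φ := by
  rintro Y ⟨X, ⟨e⟩⟩ n
  exact ⟨X⟦n⟧, ⟨(Φ.commShiftIso n).app X ≪≫ (shiftFunctor A n).mapIso e⟩⟩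

section Part1

variable (Ψ : A ⥤ B)

lemma kerSet_eq_rightOrth_imSet (adj : Φ ⊣ Ψ) : kerSet Ψ = rightOrth (imSet Φ) := by
  ext Y
  constructor
  · intro hY a ha f
    obtain ⟨X, ⟨e⟩⟩ := ha
    have hY' : IsZero (Ψ.obj Y) := hY
    haveI hsub1 : Subsingleton (X ⟶ Ψ.obj Y) := ⟨fun u v => hY'.eq_of_tgt u v⟩
    haveI hsub2 : Subsingleton (Φ.obj X ⟶ Y) := Equiv.subsingleton (adj.homEquiv X Y)
    have h0 : e.hom ≫ f = 0 := Subsingleton.elim _ _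
    calc f = e.inv ≫ (e.hom ≫ f) := by simp
    _ = 0 := by rw [h0, comp_zero]
  · intro hY
    show IsZero (Ψ.obj Y)
    rw [IsZero.iff_id_eq_zero]
    haveI hsub1 : Subsingleton (Φ.obj (Ψ.obj Y) ⟶ Y) :=
      ⟨fun u v => by
        rw [hY _ ⟨Ψ.obj Y, ⟨Iso.refl _⟩⟩ u, hY _ ⟨Ψ.obj Y, ⟨Iso.refl _⟩⟩ v]⟩
    haveI hsub2 : Subsingleton (Ψ.obj Y ⟶ Ψ.obj Y) :=
      Equiv.subsingleton (adj.homEquiv (Ψ.obj Y) Y).symm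
    exact Subsingleton.elim _ _

/-- Bijectivity of `Φ.map` on morphisms into the right orthogonal of the kernel. -/
lemma map_bijective_part1
    (hker : RightAdmissible (kerSet Φ))
    (hfull : (incl (rightOrth (kerSet Φ)) ⋙ Φ).Full)
    (hfaith : (incl (rightOrth (kerSet Φ)) ⋙ Φ).Faithful)
    {W X : B} (hX : X ∈ rightOrth (kerSet Φ)) :
    Function.Bijective (fun f : W ⟶ X => Φ.map f) := by
  obtain ⟨K, ⟨adjK⟩⟩ := hker.exists_rightAdjoint
  obtain ⟨Z, q, h, dist⟩ := distinguished_cocone_triangle (adjK.counit.app W)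
  have hZ : Z ∈ rightOrth (kerSet Φ) :=
    cone_counit_mem_rightOrth adjK (kerSet_shiftClosed Φ) dist
  have hzero : IsZero (Φ.obj ((incl (kerSet Φ)).obj (K.obj W))) := (K.obj W).property
  haveI hiso : IsIso (Φ.map q) := by
    have := isIso_mor₂_of_isZero_obj₁ (Φ.map_distinguished _ dist) hzero
    exact this
  have hfac : ∀ f : W ⟶ X, ∃ g : Z ⟶ X, f = q ≫ g := by
    intro f
    have h0 : adjK.counit.app W ≫ f = 0 :=
      hX _ (K.obj W).property _
    exact Triangle.yoneda_exact₂ _ dist f h0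
  constructor
  · intro f f' hff
    have hff' : Φ.map f = Φ.map f' := hff
    obtain ⟨g, hg⟩ := hfac f
    obtain ⟨g', hg'⟩ := hfac f'
    rw [hg, hg', Φ.map_comp, Φ.map_comp] at hff'
    have hgg : Φ.map g = Φ.map g' := by
      rwa [cancel_epi (Φ.map q)] at hff'
    have : g = g' := by
      have h : (ObjectProperty.homMk g : (⟨Z, hZ⟩ : ObjectProperty.FullSubcategory
          (fun Y : B => Y ∈ rightOrth (kerSet Φ))) ⟶ ⟨X, hX⟩) = ObjectProperty.homMk g' :=
        hfaith.map_injective hgg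
      exact congrArg InducedCategory.Hom.hom h
    rw [hg, hg', this]
  · intro u
    obtain ⟨g, hg⟩ := hfull.map_surjective (X := ⟨Z, hZ⟩) (Y := ⟨X, hX⟩)
      (inv (Φ.map q) ≫ u)
    refine ⟨q ≫ g.hom, ?_⟩
    show Φ.map (q ≫ g.hom) = u
    rw [Φ.map_comp]
    have hg' : Φ.map g.hom = inv (Φ.map q) ≫ u := hg
    rw [hg', IsIso.hom_inv_id_assoc]

lemma isIso_unit_app_part1 (adj : Φ ⊣ Ψ)
    (hker : RightAdmissible (kerSet Φ))
    (hfull : (incl (rightOrth (kerSet Φ)) ⋙ Φ).Full)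
    (hfaith : (incl (rightOrth (kerSet Φ)) ⋙ Φ).Faithful)
    {X : B} (hX : X ∈ rightOrth (kerSet Φ)) :
    IsIso (adj.unit.app X) := by
  apply isIso_of_postcomp_bijective
  intro W
  show Function.Bijective (fun f : W ⟶ X => f ≫ adj.unit.app X)
  have he : (fun f : W ⟶ X => f ≫ adj.unit.app X)
      = fun f => adj.homEquiv W (Φ.obj X) (Φ.map f) := by
    funext f
    rw [Adjunction.homEquiv_unit]
    exact (adj.unit.naturality f)
  rw [he]
  exact (adj.homEquiv W (Φ.obj X)).bijective.comp
    (map_bijective_part1 Φ hker hfull hfaith hX)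

theorem leftSplitting_of_rightSplitting (adj : Φ ⊣ Ψ) (hs : RightSplitting Φ) : LeftSplitting Ψ := by
  obtain ⟨hker, hfull, hfaith, him⟩ := hs
  have hkerS := kerSet_shiftClosed Φ
  have himS := imSet_shiftClosed Φ
  have hkerψ : kerSet Ψ = rightOrth (imSet Φ) := kerSet_eq_rightOrth_imSet Φ Ψ adj
  -- the image of Ψ
  have himψ : imSet Ψ = rightOrth (kerSet Φ) := by
    ext Z
    constructor
    · rintro ⟨Y, ⟨e⟩⟩
      apply rightOrth_isoClosed e
      intro k hk f
      have hk' : IsZero (Φ.obj k) := hk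
      haveI hsub1 : Subsingleton (Φ.obj k ⟶ Y) := ⟨fun u v => hk'.eq_of_src u v⟩
      haveI hsub2 : Subsingleton (k ⟶ Ψ.obj Y) :=
        Equiv.subsingleton (adj.homEquiv k Y).symm
      exact Subsingleton.elim _ _
    · intro hZ
      haveI := isIso_unit_app_part1 Φ Ψ adj hker hfull hfaith hZ
      exact ⟨Φ.obj Z, ⟨(asIso (adj.unit.app Z)).symm⟩⟩
  -- counit is iso on the left orthogonal of ker Ψ
  obtain ⟨ρ, ⟨adjI⟩⟩ := him.exists_rightAdjoint
  obtain ⟨K, ⟨adjK⟩⟩ := hker.exists_rightAdjoint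
  have hcounit : ∀ Y ∈ leftOrth (kerSet Ψ), IsIso (adj.counit.app Y) := by
    intro Y hY
    obtain ⟨Q, gq, hq, distI⟩ := distinguished_cocone_triangle (adjI.counit.app Y)
    have hQ : Q ∈ rightOrth (imSet Φ) := cone_counit_mem_rightOrth adjI himS distI
    have hg0 : gq = 0 := hY Q (by rw [hkerψ]; exact hQ) gq
    obtain ⟨s, hs⟩ := Triangle.coyoneda_exact₂ _ distI (𝟙 Y) (by
      show 𝟙 Y ≫ gq = 0
      rw [hg0, comp_zero])
    change Y ⟶ (ρ ⋙ incl (imSet Φ)).obj Y at s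
    change 𝟙 Y = s ≫ adjI.counit.app Y at hs
    have hs' : adjI.counit.app Y ≫ s = 𝟙 _ := by
      have hu : (adjI.counit.app Y ≫ s - 𝟙 _) ≫ adjI.counit.app Y = 0 := by
        rw [Preadditive.sub_comp, Category.assoc, ← hs]
        simp
      obtain ⟨z, hz⟩ := Triangle.coyoneda_exact₂ _ (inv_rot_of_distTriang _ distI)
        (adjI.counit.app Y ≫ s - 𝟙 _) hu
      have hz0 : z = 0 := by
        apply (rightOrth_shiftClosed himS Q hQ (-1)) _ (ρ.obj Y).property
      rw [hz0, zero_comp] at hz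
      exact sub_eq_zero.1 hz
    haveI hisoε' : IsIso (adjI.counit.app Y) := ⟨s, hs', hs.symm⟩
    -- now build the general comparison
    obtain ⟨X₀, ⟨e₀⟩⟩ := (ρ.obj Y).property
    obtain ⟨Z₀, q₀, h₀, dist₀⟩ := distinguished_cocone_triangle (adjK.counit.app X₀)
    have hZ₀ : Z₀ ∈ rightOrth (kerSet Φ) := cone_counit_mem_rightOrth adjK hkerS dist₀
    haveI hq₀ : IsIso (Φ.map q₀) := by
      have hzero : IsZero (Φ.obj ((incl (kerSet Φ)).obj (K.obj X₀))) := (K.obj X₀).property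
      have := isIso_mor₂_of_isZero_obj₁ (Φ.map_distinguished _ dist₀) hzero
      exact this
    haveI := hq₀
    let φ : Φ.obj Z₀ ≅ (incl (imSet Φ)).obj (ρ.obj Y) := (asIso (Φ.map q₀)).symm ≪≫ e₀
    let c : Φ.obj Z₀ ⟶ Y := φ.hom ≫ adjI.counit.app Y
    haveI hisoc : IsIso c := by
      show IsIso (φ.hom ≫ adjI.counit.app Y)
      infer_instance
    let j : Z₀ ⟶ Ψ.obj Y := adj.homEquiv _ _ c
    have hj : Φ.map j ≫ adj.counit.app Y = c := by
      have h1 : (adj.homEquiv Z₀ Y).symm ((adj.homEquiv Z₀ Y) c) = c :=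
        (adj.homEquiv Z₀ Y).symm_apply_apply c
      rw [Adjunction.homEquiv_counit] at h1
      exact h1
    haveI hηZ₀ : IsIso (adj.unit.app Z₀) :=
      isIso_unit_app_part1 Φ Ψ adj hker hfull hfaith hZ₀
    haveI hjiso : IsIso j := by
      have hj2 : j = adj.unit.app Z₀ ≫ Ψ.map c := adj.homEquiv_unit Z₀ Y c
      rw [hj2]
      infer_instance
    haveI : IsIso (Φ.map j) := inferInstance
    have : adj.counit.app Y = inv (Φ.map j) ≫ c := by
      rw [← hj, IsIso.inv_hom_id_assoc]
    rw [this]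
    infer_instance
  -- bijectivity of Ψ.map on left orthogonal
  have key : ∀ (Y Y' : A), Y ∈ leftOrth (kerSet Ψ) →
      Function.Bijective (fun u : Y ⟶ Y' => Ψ.map u) := by
    intro Y Y' hY
    have he : (fun u : Y ⟶ Y' => Ψ.map u)
        = fun u => adj.homEquiv (Ψ.obj Y) Y' (adj.counit.app Y ≫ u) := by
      funext u
      rw [Adjunction.homEquiv_unit, Functor.map_comp, ← Category.assoc,
        adj.right_triangle_components, Category.id_comp]
    rw [he]
    haveI := hcounit Y hY
    have hbij : Function.Bijective (fun u : Y ⟶ Y' => adj.counit.app Y ≫ u) := by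
      constructor
      · intro u v huv
        have huv' : adj.counit.app Y ≫ u = adj.counit.app Y ≫ v := huv
        rwa [cancel_epi] at huv'
      · intro v
        exact ⟨inv (adj.counit.app Y) ≫ v, by simp⟩
    exact (adj.homEquiv (Ψ.obj Y) Y').bijective.comp hbij
  refine ⟨?_, ?_, ?_, ?_⟩
  · rw [hkerψ]
    exact leftAdmissible_rightOrth himS him
  · exact ⟨fun {X Y} t => ⟨ObjectProperty.homMk ((key X.obj Y.obj X.property).2 t).choose,
      ((key X.obj Y.obj X.property).2 t).choose_spec⟩⟩
  · exact ⟨fun {X Y} f g hfg => ObjectProperty.hom_ext _ ((key X.obj Y.obj X.property).1 hfg)⟩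
  · rw [himψ]
    exact leftAdmissible_rightOrth hkerS hker

end Part1

section Part2

variable (Ψ : A ⥤ B)

lemma kerSet_eq_leftOrth_imSet (adj : Ψ ⊣ Φ) : kerSet Ψ = leftOrth (imSet Φ) := by
  ext Y
  constructor
  · intro hY a ha f
    obtain ⟨X, ⟨e⟩⟩ := ha
    have hY' : IsZero (Ψ.obj Y) := hY
    haveI hsub1 : Subsingleton (Ψ.obj Y ⟶ X) := ⟨fun u v => hY'.eq_of_src u v⟩
    haveI hsub2 : Subsingleton (Y ⟶ Φ.obj X) :=
      Equiv.subsingleton (adj.homEquiv Y X).symm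
    have h0 : f ≫ e.inv = 0 := Subsingleton.elim _ _
    calc f = (f ≫ e.inv) ≫ e.hom := by simp
    _ = 0 := by rw [h0, zero_comp]
  · intro hY
    show IsZero (Ψ.obj Y)
    rw [IsZero.iff_id_eq_zero]
    haveI hsub1 : Subsingleton (Y ⟶ Φ.obj (Ψ.obj Y)) :=
      ⟨fun u v => by
        rw [hY _ ⟨Ψ.obj Y, ⟨Iso.refl _⟩⟩ u, hY _ ⟨Ψ.obj Y, ⟨Iso.refl _⟩⟩ v]⟩
    haveI hsub2 : Subsingleton (Ψ.obj Y ⟶ Ψ.obj Y) :=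
      Equiv.subsingleton (adj.homEquiv Y (Ψ.obj Y))
    exact Subsingleton.elim _ _

lemma map_bijective_part2
    (hker : LeftAdmissible (kerSet Φ))
    (hfull : (incl (leftOrth (kerSet Φ)) ⋙ Φ).Full)
    (hfaith : (incl (leftOrth (kerSet Φ)) ⋙ Φ).Faithful)
    {X W : B} (hX : X ∈ leftOrth (kerSet Φ)) :
    Function.Bijective (fun f : X ⟶ W => Φ.map f) := by
  obtain ⟨Kl, ⟨adjK⟩⟩ := hker.exists_leftAdjoint
  obtain ⟨Wl, p, h, dist⟩ := distinguished_cocone_triangle₁ (adjK.unit.app W)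
  have hWl : Wl ∈ leftOrth (kerSet Φ) :=
    cocone_unit_mem_leftOrth adjK (kerSet_shiftClosed Φ) dist
  have hzero : IsZero (Φ.obj ((incl (kerSet Φ)).obj (Kl.obj W))) := (Kl.obj W).property
  haveI hiso : IsIso (Φ.map p) := by
    have := isIso_mor₁_of_isZero_obj₃ (Φ.map_distinguished _ dist) hzero
    exact this
  have hfac : ∀ f : X ⟶ W, ∃ g : X ⟶ Wl, f = g ≫ p := by
    intro f
    have h0 : f ≫ adjK.unit.app W = 0 :=
      hX _ (Kl.obj W).property _
    exact Triangle.coyoneda_exact₂ _ dist f h0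
  constructor
  · intro f f' hff
    have hff' : Φ.map f = Φ.map f' := hff
    obtain ⟨g, hg⟩ := hfac f
    obtain ⟨g', hg'⟩ := hfac f'
    rw [hg, hg', Φ.map_comp, Φ.map_comp] at hff'
    have hgg : Φ.map g = Φ.map g' := by
      rwa [cancel_mono (Φ.map p)] at hff'
    have : g = g' := by
      have h : (ObjectProperty.homMk g : (⟨X, hX⟩ : ObjectProperty.FullSubcategory
          (fun Y : B => Y ∈ leftOrth (kerSet Φ))) ⟶ ⟨Wl, hWl⟩) = ObjectProperty.homMk g' :=
        hfaith.map_injective hgg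
      exact congrArg InducedCategory.Hom.hom h
    rw [hg, hg', this]
  · intro u
    obtain ⟨g, hg⟩ := hfull.map_surjective (X := ⟨X, hX⟩) (Y := ⟨Wl, hWl⟩)
      (u ≫ inv (Φ.map p))
    refine ⟨g.hom ≫ p, ?_⟩
    show Φ.map (g.hom ≫ p) = u
    rw [Φ.map_comp]
    have hg' : Φ.map g.hom = u ≫ inv (Φ.map p) := hg
    rw [hg', Category.assoc, IsIso.inv_hom_id, Category.comp_id]

lemma isIso_counit_app_part2 (adj : Ψ ⊣ Φ)
    (hker : LeftAdmissible (kerSet Φ))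
    (hfull : (incl (leftOrth (kerSet Φ)) ⋙ Φ).Full)
    (hfaith : (incl (leftOrth (kerSet Φ)) ⋙ Φ).Faithful)
    {X : B} (hX : X ∈ leftOrth (kerSet Φ)) :
    IsIso (adj.counit.app X) := by
  apply isIso_of_precomp_bijective
  intro W
  show Function.Bijective (fun f : X ⟶ W => adj.counit.app X ≫ f)
  have he : (fun f : X ⟶ W => adj.counit.app X ≫ f)
      = fun f => (adj.homEquiv (Φ.obj X) W).symm (Φ.map f) := by
    funext f
    rw [Adjunction.homEquiv_counit]
    exact (adj.counit.naturality f).symm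
  rw [he]
  exact (adj.homEquiv (Φ.obj X) W).symm.bijective.comp
    (map_bijective_part2 Φ hker hfull hfaith hX)

theorem rightSplitting_of_leftSplitting (adj : Ψ ⊣ Φ) (hs : LeftSplitting Φ) : RightSplitting Ψ := by
  obtain ⟨hker, hfull, hfaith, him⟩ := hs
  have hkerS := kerSet_shiftClosed Φ
  have himS := imSet_shiftClosed Φ
  have hkerψ : kerSet Ψ = leftOrth (imSet Φ) := kerSet_eq_leftOrth_imSet Φ Ψ adj
  have himψ : imSet Ψ = leftOrth (kerSet Φ) := by
    ext Z
    constructor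
    · rintro ⟨Y, ⟨e⟩⟩
      apply leftOrth_isoClosed e
      intro k hk f
      have hk' : IsZero (Φ.obj k) := hk
      haveI hsub1 : Subsingleton (Y ⟶ Φ.obj k) := ⟨fun u v => hk'.eq_of_tgt u v⟩
      haveI hsub2 : Subsingleton (Ψ.obj Y ⟶ k) :=
        Equiv.subsingleton (adj.homEquiv Y k)
      exact Subsingleton.elim _ _
    · intro hZ
      haveI := isIso_counit_app_part2 Φ Ψ adj hker hfull hfaith hZ
      exact ⟨Φ.obj Z, ⟨asIso (adj.counit.app Z)⟩⟩
  obtain ⟨Il, ⟨adjI⟩⟩ := him.exists_leftAdjoint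
  obtain ⟨Kl, ⟨adjK⟩⟩ := hker.exists_leftAdjoint
  have hunit : ∀ Y ∈ rightOrth (kerSet Ψ), IsIso (adj.unit.app Y) := by
    intro Y hY
    obtain ⟨P, p, hp, distI⟩ := distinguished_cocone_triangle₁ (adjI.unit.app Y)
    have hP : P ∈ leftOrth (imSet Φ) := cocone_unit_mem_leftOrth adjI himS distI
    have hp0 : p = 0 := hY P (by rw [hkerψ]; exact hP) p
    obtain ⟨s, hs⟩ := Triangle.yoneda_exact₂ _ distI (𝟙 Y) (by
      show p ≫ 𝟙 Y = 0
      rw [hp0, zero_comp])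
    change (Il ⋙ incl (imSet Φ)).obj Y ⟶ Y at s
    change 𝟙 Y = adjI.unit.app Y ≫ s at hs
    have hs' : s ≫ adjI.unit.app Y = 𝟙 _ := by
      have hu : adjI.unit.app Y ≫ (s ≫ adjI.unit.app Y - 𝟙 _) = 0 := by
        rw [Preadditive.comp_sub, ← Category.assoc, ← hs]
        simp
      obtain ⟨w, hw⟩ := Triangle.yoneda_exact₃ _ distI
        (s ≫ adjI.unit.app Y - 𝟙 _) hu
      have hw0 : w = 0 := by
        apply (leftOrth_shiftClosed himS P hP 1) _ (Il.obj Y).property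
      rw [hw0, comp_zero] at hw
      exact sub_eq_zero.1 hw
    haveI hisoη' : IsIso (adjI.unit.app Y) := ⟨s, hs.symm, hs'⟩
    obtain ⟨X₀, ⟨e₀⟩⟩ := (Il.obj Y).property
    obtain ⟨Z₀, p₀, h₀, dist₀⟩ := distinguished_cocone_triangle₁ (adjK.unit.app X₀)
    have hZ₀ : Z₀ ∈ leftOrth (kerSet Φ) := cocone_unit_mem_leftOrth adjK hkerS dist₀
    haveI hp₀ : IsIso (Φ.map p₀) := by
      have hzero : IsZero (Φ.obj ((incl (kerSet Φ)).obj (Kl.obj X₀))) := (Kl.obj X₀).property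
      have := isIso_mor₁_of_isZero_obj₃ (Φ.map_distinguished _ dist₀) hzero
      exact this
    haveI := hp₀
    let φ : Φ.obj Z₀ ≅ (incl (imSet Φ)).obj (Il.obj Y) := asIso (Φ.map p₀) ≪≫ e₀
    let c : Y ⟶ Φ.obj Z₀ := adjI.unit.app Y ≫ φ.inv
    haveI hisoc : IsIso c := by
      show IsIso (adjI.unit.app Y ≫ φ.inv)
      infer_instance
    let j : Ψ.obj Y ⟶ Z₀ := (adj.homEquiv _ _).symm c
    have hj : adj.unit.app Y ≫ Φ.map j = c := by
      have h1 : (adj.homEquiv Y Z₀) ((adj.homEquiv Y Z₀).symm c) = c :=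
        (adj.homEquiv Y Z₀).apply_symm_apply c
      rw [Adjunction.homEquiv_unit] at h1
      exact h1
    haveI hεZ₀ : IsIso (adj.counit.app Z₀) :=
      isIso_counit_app_part2 Φ Ψ adj hker hfull hfaith hZ₀
    haveI hjiso : IsIso j := by
      have hj2 : j = Ψ.map c ≫ adj.counit.app Z₀ := adj.homEquiv_counit Y Z₀ c
      rw [hj2]
      infer_instance
    haveI : IsIso (Φ.map j) := inferInstance
    have : adj.unit.app Y = c ≫ inv (Φ.map j) := by
      rw [← hj, Category.assoc, IsIso.hom_inv_id, Category.comp_id]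
    rw [this]
    infer_instance
  have key : ∀ (Y Y' : A), Y' ∈ rightOrth (kerSet Ψ) →
      Function.Bijective (fun u : Y ⟶ Y' => Ψ.map u) := by
    intro Y Y' hY'
    have he : (fun u : Y ⟶ Y' => Ψ.map u)
        = fun u => (adj.homEquiv Y (Ψ.obj Y')).symm (u ≫ adj.unit.app Y') := by
      funext u
      rw [Adjunction.homEquiv_counit, Functor.map_comp, Category.assoc]
      simp
    rw [he]
    haveI := hunit Y' hY'
    have hbij : Function.Bijective (fun u : Y ⟶ Y' => u ≫ adj.unit.app Y') := by
      constructor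
      · intro u v huv
        have huv' : u ≫ adj.unit.app Y' = v ≫ adj.unit.app Y' := huv
        rwa [cancel_mono] at huv'
      · intro v
        exact ⟨v ≫ inv (adj.unit.app Y'), by simp⟩
    exact (adj.homEquiv Y (Ψ.obj Y')).symm.bijective.comp hbij
  refine ⟨?_, ?_, ?_, ?_⟩
  · rw [hkerψ]
    exact rightAdmissible_leftOrth himS him
  · exact ⟨fun {X Y} t => ⟨ObjectProperty.homMk ((key X.obj Y.obj Y.property).2 t).choose,
      ((key X.obj Y.obj Y.property).2 t).choose_spec⟩⟩
  · exact ⟨fun {X Y} f g hfg => ObjectProperty.hom_ext _ ((key X.obj Y.obj Y.property).1 hfg)⟩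
  · rw [himψ]
    exact rightAdmissible_leftOrth hkerS hker

end Part2

end Main


/-- If `Φ` is a right (resp. left) splitting exact functor between triangulated categories
and `Ψ` is its right (resp. left) adjoint, then `Ψ` is a left (resp. right) splitting
functor. -/
theorem statement_12 {B : Type u₁} [Category.{v₁} B] [HasZeroObject B] [Preadditive B]
    [HasShift B ℤ] [∀ n : ℤ, (shiftFunctor B n).Additive] [Pretriangulated B]
    {A : Type u₂} [Category.{v₂} A] [HasZeroObject A] [Preadditive A]
    [HasShift A ℤ] [∀ n : ℤ, (shiftFunctor A n).Additive] [Pretriangulated A]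
    (Φ : B ⥤ A) [Φ.CommShift ℤ] [Φ.IsTriangulated] (Ψ : A ⥤ B) :
    (∀ _ : Φ ⊣ Ψ, RightSplitting Φ → LeftSplitting Ψ) ∧
    (∀ _ : Ψ ⊣ Φ, LeftSplitting Φ → RightSplitting Ψ) := by
  constructor
  · intro adj h
    exact leftSplitting_of_rightSplitting Φ Ψ adj h
  · intro adj h
    exact rightSplitting_of_leftSplitting Φ Ψ adj h

end HPD
end

section
/- Let D be a triangulated category with a Lefschetz decomposition D = ⟨A_0, A_1(1), …, A_{i-1}(i-1)⟩ with respect to an autoequivalence F ↦ F(1), with primitive subcategories a_k, and let α_0^* : D → A_0 be the left adjoint of the inclusion A_0 → D. Then for 1 ≤ r ≤ i one has α_0^*(⟨A_0(1), …, A_{r-1}(r)⟩) ⊆ ⟨α_0^*(a_0(1)), …, α_0^*(a_{r-1}(r))⟩. -/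
namespace HPD
open CategoryTheory Limits Pretriangulated

variable {D : Type u} [Category.{v} D]

/-- Iterated composition of an endofunctor (`funPow τ n = τ^n`, applied `n` times). -/
def funPow (τ : D ⥤ D) : ℕ → D ⥤ D
  | 0 => 𝟭 D
  | n + 1 => funPow τ n ⋙ τ

/-- The essential image of a set of objects under an endofunctor. -/
def essImg (F : D ⥤ D) (A : Set D) : Set D := {Y : D | ∃ X ∈ A, Nonempty (F.obj X ≅ Y)}

/-- `twist τ n A` is the subcategory `A(n)`, the image of `A` under the `n`-th power of the
autoequivalence `τ : F ↦ F(1)`. -/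
def twist (τ : D ⥤ D) (n : ℕ) (A : Set D) : Set D := essImg (funPow τ n) A

section
variable [Preadditive D]

/-- The `k`-th primitive subcategory `a_k = A_{k+1}^⊥ ∩ A_k` of a Lefschetz chain. -/
def prim (A : ℕ → Set D) (k : ℕ) : Set D := A k ∩ rightOrth (A (k + 1))

end

section
variable [HasZeroObject D] [Preadditive D] [HasShift D ℤ]
  [∀ n : ℤ, (shiftFunctor D n).Additive] [Pretriangulated D]

/-- A Lefschetz decomposition `D = ⟨A_0, A_1(1), …, A_{m-1}(m-1)⟩` of a triangulated category
`D` with respect to an autoequivalence `τ : F ↦ F(1)`: a chain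
`0 ⊆ A_{m-1} ⊆ ⋯ ⊆ A_1 ⊆ A_0` of admissible full triangulated subcategories (we set
`A_k = 0` for `k ≥ m`) such that the subcategories `A_k(k)` form a semiorthogonal
decomposition of `D`. -/
structure LefschetzData (τ : D ⥤ D) (A : ℕ → Set D) (m : ℕ) : Prop where
  pos : 0 < m
  equiv : τ.IsEquivalence
  chain : ∀ k : ℕ, A (k + 1) ⊆ A k
  triangSub : ∀ k : ℕ, IsTriangulatedSub (A k)
  admissible : ∀ k : ℕ, Admissible (A k)
  vanish : ∀ k : ℕ, m ≤ k → ∀ X ∈ A k, IsZero X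
  sod : IsSODOn Set.univ (fun k : Fin m => twist τ (k : ℕ) (A (k : ℕ)))

end

end HPD
namespace HPD
open CategoryTheory Limits Pretriangulated

section Helpers

variable {D : Type u} [Category.{v} D]

theorem funPow_isEquivalence (τ : D ⥤ D) [τ.IsEquivalence] :
    ∀ n : ℕ, (funPow τ n).IsEquivalence
  | 0 => inferInstanceAs (Functor.IsEquivalence (𝟭 D))
  | n + 1 => by
      haveI := funPow_isEquivalence τ n
      exact inferInstanceAs (Functor.IsEquivalence (funPow τ n ⋙ τ))

section Triang

variable [HasZeroObject D] [Preadditive D] [HasShift D ℤ]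
  [∀ n : ℤ, (shiftFunctor D n).Additive] [Pretriangulated D]

theorem subset_triangulatedClosure (S : Set D) : S ⊆ triangulatedClosure S :=
  fun _ hX _ _ hS => hS hX

theorem isTriangulatedSub_triangulatedClosure (S : Set D) :
    IsTriangulatedSub (triangulatedClosure S) where
  zero X hX A hA _ := hA.zero X hX
  isoClosed := fun {X Y} e hX A hA hS => hA.isoClosed e (hX A hA hS)
  shift X n hX A hA hS := hA.shift X n (hX A hA hS)
  ext₂ T hT h1 h3 A hA hS := hA.ext₂ T hT (h1 A hA hS) (h3 A hA hS)

theorem precomp_shift_bij {V W : D} (φ : V ⟶ W) (n : ℤ) (a : D)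
    (h : Function.Bijective fun g : W ⟶ (shiftFunctor D (-n)).obj a => φ ≫ g) :
    Function.Bijective fun g : (shiftFunctor D n).obj W ⟶ a =>
      (shiftFunctor D n).map φ ≫ g := by
  let adjn := (shiftEquiv D n).toAdjunction
  have key : (fun g : (shiftFunctor D n).obj W ⟶ a => (shiftFunctor D n).map φ ≫ g)
      = (adjn.homEquiv V a).symm ∘ (fun g : W ⟶ (shiftFunctor D (-n)).obj a => φ ≫ g)
        ∘ (adjn.homEquiv W a) := by
    funext g
    dsimp only [Function.comp]
    erw [← Adjunction.homEquiv_naturality_left, Equiv.symm_apply_apply]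
    rfl
  rw [key]
  exact ((adjn.homEquiv V a).symm.bijective.comp h).comp (adjn.homEquiv W a).bijective

theorem postcomp_shift_bij {V W : D} (φ : V ⟶ W) (b : D)
    (h : Function.Bijective fun g : (shiftFunctor D (-1 : ℤ)).obj b ⟶ V => g ≫ φ) :
    Function.Bijective fun g : b ⟶ (shiftFunctor D (1 : ℤ)).obj V =>
      g ≫ (shiftFunctor D (1 : ℤ)).map φ := by
  let adj1 := (shiftEquiv D (1 : ℤ)).symm.toAdjunction
  have key : (fun g : b ⟶ (shiftFunctor D (1 : ℤ)).obj V =>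
        g ≫ (shiftFunctor D (1 : ℤ)).map φ)
      = (adj1.homEquiv b W) ∘ (fun g : (shiftFunctor D (-1 : ℤ)).obj b ⟶ V => g ≫ φ)
        ∘ (adj1.homEquiv b V).symm := by
    funext g
    dsimp only [Function.comp]
    erw [Adjunction.homEquiv_naturality_right, Equiv.apply_symm_apply]
    rfl
  rw [key]
  exact ((adj1.homEquiv b W).bijective.comp h).comp (adj1.homEquiv b V).symm.bijective

variable {A : ℕ → Set D}

theorem unit_precomp_bij {L : D ⥤ ObjectProperty.FullSubcategory (fun X : D => X ∈ A 0)}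
    (adj : L ⊣ incl (A 0)) (X : D) (a : D) (ha : a ∈ A 0) :
    Function.Bijective fun g : (incl (A 0)).obj (L.obj X) ⟶ a => adj.unit.app X ≫ g := by
  let a' : ObjectProperty.FullSubcategory (fun X : D => X ∈ A 0) := ⟨a, ha⟩
  let E : (L.obj X ⟶ a') ≃ ((incl (A 0)).obj (L.obj X) ⟶ a) :=
    (ObjectProperty.fullyFaithfulι _).homEquiv
  have key : (fun g : (incl (A 0)).obj (L.obj X) ⟶ a => adj.unit.app X ≫ g)
      = (fun f : L.obj X ⟶ a' => adj.homEquiv X a' f) ∘ E.symm := by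
    funext g
    dsimp only [Function.comp]
    rw [Adjunction.homEquiv_unit]
    rfl
  rw [key]
  exact (adj.homEquiv X a').bijective.comp E.symm.bijective

theorem counit_postcomp_bij {S : Set D} {R : D ⥤ ObjectProperty.FullSubcategory (fun X : D => X ∈ S)}
    (adj2 : incl S ⊣ R) (X : D) (b : D) (hb : b ∈ S) :
    Function.Bijective fun g : b ⟶ (incl S).obj (R.obj X) => g ≫ adj2.counit.app X := by
  let b' : ObjectProperty.FullSubcategory (fun X : D => X ∈ S) := ⟨b, hb⟩
  let E : (b' ⟶ R.obj X) ≃ (b ⟶ (incl S).obj (R.obj X)) :=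
    (ObjectProperty.fullyFaithfulι _).homEquiv
  have key : (fun g : b ⟶ (incl S).obj (R.obj X) => g ≫ adj2.counit.app X)
      = (fun f : b' ⟶ R.obj X => (adj2.homEquiv b' X).symm f) ∘ E.symm := by
    funext g
    dsimp only [Function.comp]
    rw [Adjunction.homEquiv_counit]
    rfl
  rw [key]
  exact (adj2.homEquiv b' X).symm.bijective.comp E.symm.bijective

theorem isIso_of_precomp_bij {S : Set D} {Z W : D} (c : Z ⟶ W) (hZ : Z ∈ S) (hW : W ∈ S)
    (h : ∀ a ∈ S, Function.Bijective fun g : W ⟶ a => c ≫ g) : IsIso c := by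
  obtain ⟨d, hd⟩ := (h Z hZ).2 (𝟙 Z)
  have hd' : c ≫ d = 𝟙 Z := hd
  refine ⟨⟨d, hd', ?_⟩⟩
  apply (h W hW).1
  show c ≫ d ≫ c = c ≫ 𝟙 W
  rw [← Category.assoc, hd', Category.id_comp, Category.comp_id]

theorem P_isZero {L : D ⥤ ObjectProperty.FullSubcategory (fun X : D => X ∈ A 0)}
    (adj : L ⊣ incl (A 0)) (X : D)
    (h0 : ∀ a ∈ A 0, ∀ f : X ⟶ a, f = 0) :
    IsZero ((incl (A 0)).obj (L.obj X)) := by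
  rw [IsZero.iff_id_eq_zero]
  apply (unit_precomp_bij adj X _ (L.obj X).property).1
  show adj.unit.app X ≫ 𝟙 _ = adj.unit.app X ≫ 0
  rw [Category.comp_id, comp_zero]
  exact h0 _ (L.obj X).property _

theorem P_map_triangle {L : D ⥤ ObjectProperty.FullSubcategory (fun X : D => X ∈ A 0)}
    (adj : L ⊣ incl (A 0)) (hA0 : IsTriangulatedSub (A 0))
    (T : Triangle D) (hT : T ∈ distTriang D) :
    ∃ T' : Triangle D, T' ∈ (distTriang D) ∧
      T'.obj₁ = (incl (A 0)).obj (L.obj T.obj₁) ∧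
      T'.obj₂ = (incl (A 0)).obj (L.obj T.obj₂) ∧
      Nonempty (T'.obj₃ ≅ (incl (A 0)).obj (L.obj T.obj₃)) := by
  have hbij : ∀ (X a : D), a ∈ A 0 →
      Function.Bijective fun g : (incl (A 0)).obj (L.obj X) ⟶ a => adj.unit.app X ≫ g :=
    fun X a ha => unit_precomp_bij adj X a ha
  have hbijs : ∀ (X a : D), a ∈ A 0 →
      Function.Bijective fun g : (shiftFunctor D (1 : ℤ)).obj ((incl (A 0)).obj (L.obj X)) ⟶ a
        => (shiftFunctor D (1 : ℤ)).map (adj.unit.app X) ≫ g :=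
    fun X a ha => precomp_shift_bij (adj.unit.app X) 1 a (hbij X _ (hA0.shift a (-1) ha))
  obtain ⟨W, pg, w, hT'⟩ := distinguished_cocone_triangle ((incl (A 0)).map (L.map T.mor₁))
  have hW : W ∈ A 0 :=
    hA0.ext₂ _ (rot_of_distTriang _ hT') (L.obj T.obj₂).property
      (hA0.shift _ 1 (L.obj T.obj₁).property)
  have hnat : T.mor₁ ≫ adj.unit.app T.obj₂
      = adj.unit.app T.obj₁ ≫ (incl (A 0)).map (L.map T.mor₁) := by
    simpa using adj.unit.naturality T.mor₁
  obtain ⟨c, hc₁, hc₂⟩ := complete_distinguished_triangle_morphism T _ hT hT'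
    (adj.unit.app T.obj₁) (adj.unit.app T.obj₂) hnat
  simp only [Triangle.mk_obj₃, Triangle.mk_mor₂, Triangle.mk_mor₃] at hc₁ hc₂
  obtain ⟨c', hc'⟩ := (hbij T.obj₃ W hW).2 c
  have hc'' : adj.unit.app T.obj₃ ≫ c' = c := hc'
  have hkey : ∀ a ∈ A 0, Function.Bijective fun u : W ⟶ a => c ≫ u := by
    intro a ha
    constructor
    · -- injectivity
      have hzero : ∀ u : W ⟶ a, c ≫ u = 0 → u = 0 := by
        intro u hu
        have h2 : pg ≫ u = 0 := by
          apply (hbij T.obj₂ a ha).1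
          show adj.unit.app T.obj₂ ≫ pg ≫ u = adj.unit.app T.obj₂ ≫ 0
          erw [comp_zero, ← Category.assoc, ← hc₁, Category.assoc, hu, comp_zero]
        obtain ⟨t, ht⟩ := Triangle.yoneda_exact₃ _ hT' u h2
        simp only [Triangle.mk_obj₁, Triangle.mk_mor₃] at ht
        have h3 : T.mor₃ ≫ ((shiftFunctor D (1 : ℤ)).map (adj.unit.app T.obj₁) ≫ t) = 0 := by
          erw [← Category.assoc, hc₂, Category.assoc, ← ht, hu]
        obtain ⟨s, hs⟩ := Triangle.yoneda_exact₃ _ (rot_of_distTriang _ hT)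
          ((shiftFunctor D (1 : ℤ)).map (adj.unit.app T.obj₁) ≫ t) h3
        simp only [Triangle.rotate_obj₁, Triangle.rotate_mor₃] at hs
        obtain ⟨s₂, hs₂⟩ := (hbijs T.obj₂ a ha).2 s
        have hs₂' : (shiftFunctor D (1 : ℤ)).map (adj.unit.app T.obj₂) ≫ s₂ = s := hs₂
        have h5 : t = -((shiftFunctor D (1 : ℤ)).map ((incl (A 0)).map (L.map T.mor₁)) ≫ s₂) := by
          apply (hbijs T.obj₁ a ha).1
          show (shiftFunctor D (1 : ℤ)).map (adj.unit.app T.obj₁) ≫ t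
            = (shiftFunctor D (1 : ℤ)).map (adj.unit.app T.obj₁)
              ≫ (-((shiftFunctor D (1 : ℤ)).map ((incl (A 0)).map (L.map T.mor₁)) ≫ s₂))
          erw [hs, ← hs₂', Preadditive.neg_comp, Preadditive.comp_neg]
          congr 1
          erw [← Category.assoc, ← Category.assoc, ← Functor.map_comp, ← Functor.map_comp, hnat]; rfl
        have hwzero : w ≫ (shiftFunctor D (1 : ℤ)).map ((incl (A 0)).map (L.map T.mor₁)) = 0 := by
          have h0 := comp_distTriang_mor_zero₃₁ _ hT'
          exact h0
        erw [ht, h5, Preadditive.comp_neg, ← Category.assoc, hwzero, zero_comp, neg_zero]; rfl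
      intro u₁ u₂ h12
      have h12' : c ≫ u₁ = c ≫ u₂ := h12
      have := hzero (u₁ - u₂) (by erw [Preadditive.comp_sub, sub_eq_zero]; exact h12')
      rwa [sub_eq_zero] at this
    · -- surjectivity
      intro v
      obtain ⟨v₂, hv₂⟩ := (hbij T.obj₂ a ha).2 (T.mor₂ ≫ v)
      have hv₂' : adj.unit.app T.obj₂ ≫ v₂ = T.mor₂ ≫ v := hv₂
      have h6 : (incl (A 0)).map (L.map T.mor₁) ≫ v₂ = 0 := by
        apply (hbij T.obj₁ a ha).1
        show adj.unit.app T.obj₁ ≫ (incl (A 0)).map (L.map T.mor₁) ≫ v₂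
          = adj.unit.app T.obj₁ ≫ 0
        rw [comp_zero, ← Category.assoc, ← hnat, Category.assoc, hv₂', ← Category.assoc,
          comp_distTriang_mor_zero₁₂ _ hT, zero_comp]
      obtain ⟨u₀x, hu₀x⟩ := Triangle.yoneda_exact₂ _ hT' v₂ h6
      set u₀ : W ⟶ a := u₀x with hu₀def
      have hu₀ : v₂ = pg ≫ u₀ := hu₀x
      have h7 : T.mor₂ ≫ (v - c ≫ u₀) = 0 := by
        erw [Preadditive.comp_sub, sub_eq_zero, ← Category.assoc, hc₁, Category.assoc, ← hu₀, hv₂']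
      obtain ⟨tx, htx⟩ := Triangle.yoneda_exact₂ _ (rot_of_distTriang _ hT) (v - c ≫ u₀) h7
      set t : (shiftFunctor D (1 : ℤ)).obj T.obj₁ ⟶ a := tx with htdef
      have ht : v - c ≫ u₀ = T.mor₃ ≫ t := htx
      obtain ⟨t₂, ht₂⟩ := (hbijs T.obj₁ a ha).2 t
      have ht₂' : (shiftFunctor D (1 : ℤ)).map (adj.unit.app T.obj₁) ≫ t₂ = t := ht₂
      refine ⟨u₀ + w ≫ t₂, ?_⟩
      show c ≫ (u₀ + w ≫ t₂) = v
      have hcw : c ≫ w ≫ t₂ = T.mor₃ ≫ t := by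
        erw [← Category.assoc, ← hc₂, Category.assoc, ht₂']
      erw [Preadditive.comp_add, hcw, ← ht]
      abel
  have hbijc' : ∀ a ∈ A 0, Function.Bijective fun u : W ⟶ a => c' ≫ u := by
    intro a ha
    have hcomp : ((fun g : (incl (A 0)).obj (L.obj T.obj₃) ⟶ a => adj.unit.app T.obj₃ ≫ g)
        ∘ (fun u : W ⟶ a => c' ≫ u)) = fun u : W ⟶ a => c ≫ u := by
      funext u
      dsimp only [Function.comp]
      rw [← Category.assoc, hc'']; rfl
    have hk := hkey a ha
    rw [← hcomp] at hk
    exact (Function.Bijective.of_comp_iff' (hbij T.obj₃ a ha) _).1 hk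
  have : IsIso c' := isIso_of_precomp_bij c' (L.obj T.obj₃).property hW hbijc'
  exact ⟨Triangle.mk ((incl (A 0)).map (L.map T.mor₁)) pg w, hT', rfl, rfl, ⟨(asIso c').symm⟩⟩

theorem P_shift_iso {L : D ⥤ ObjectProperty.FullSubcategory (fun X : D => X ∈ A 0)}
    (adj : L ⊣ incl (A 0)) (hA0 : IsTriangulatedSub (A 0)) (X : D) (n : ℤ) :
    Nonempty ((incl (A 0)).obj (L.obj ((shiftFunctor D n).obj X)) ≅
      (shiftFunctor D n).obj ((incl (A 0)).obj (L.obj X))) := by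
  have hmem : (shiftFunctor D n).obj ((incl (A 0)).obj (L.obj X)) ∈ A 0 :=
    hA0.shift _ n (L.obj X).property
  obtain ⟨c', hc'⟩ := (unit_precomp_bij adj ((shiftFunctor D n).obj X) _ hmem).2
    ((shiftFunctor D n).map (adj.unit.app X))
  have hc'' : adj.unit.app ((shiftFunctor D n).obj X) ≫ c'
      = (shiftFunctor D n).map (adj.unit.app X) := hc'
  have hbijθ : ∀ a ∈ A 0, Function.Bijective
      fun g : (shiftFunctor D n).obj ((incl (A 0)).obj (L.obj X)) ⟶ a =>
        (shiftFunctor D n).map (adj.unit.app X) ≫ g :=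
    fun a ha => precomp_shift_bij (adj.unit.app X) n a
      (unit_precomp_bij adj X _ (hA0.shift a (-n) ha))
  have hbijc' : ∀ a ∈ A 0, Function.Bijective
      fun u : (shiftFunctor D n).obj ((incl (A 0)).obj (L.obj X)) ⟶ a => c' ≫ u := by
    intro a ha
    have hcomp : ((fun g : (incl (A 0)).obj (L.obj ((shiftFunctor D n).obj X)) ⟶ a =>
        adj.unit.app ((shiftFunctor D n).obj X) ≫ g)
        ∘ (fun u : (shiftFunctor D n).obj ((incl (A 0)).obj (L.obj X)) ⟶ a => c' ≫ u))
        = fun u : (shiftFunctor D n).obj ((incl (A 0)).obj (L.obj X)) ⟶ a =>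
          (shiftFunctor D n).map (adj.unit.app X) ≫ u := by
      funext u
      dsimp only [Function.comp]
      rw [← Category.assoc, hc'']
    have hk := hbijθ a ha
    rw [← hcomp] at hk
    exact (Function.Bijective.of_comp_iff' (unit_precomp_bij adj _ a ha) _).1 hk
  have : IsIso c' := isIso_of_precomp_bij c' (L.obj _).property hmem hbijc'
  exact ⟨asIso c'⟩

theorem transport_precomp_bij {G : D ⥤ D} (FF : G.FullyFaithful) {X Y b a : D}
    (hiso : G.obj b ≅ a) (q : X ⟶ Y)
    (h : Function.Bijective fun t : Y ⟶ b => q ≫ t) :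
    Function.Bijective fun s : G.obj Y ⟶ a => G.map q ≫ s := by
  let E : ∀ Z : D, (Z ⟶ b) ≃ (G.obj Z ⟶ a) := fun Z =>
    { toFun := fun t => G.map t ≫ hiso.hom
      invFun := fun s => FF.preimage (s ≫ hiso.inv)
      left_inv := fun t => FF.map_injective (by simp)
      right_inv := fun s => by simp }
  have key : (fun s : G.obj Y ⟶ a => G.map q ≫ s)
      = (E X) ∘ (fun t : Y ⟶ b => q ≫ t) ∘ (E Y).symm := by
    funext s
    show G.map q ≫ s = G.map (q ≫ FF.preimage (s ≫ hiso.inv)) ≫ hiso.hom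
    rw [G.map_comp, Category.assoc, FF.map_preimage, Category.assoc, Iso.inv_hom_id,
      Category.comp_id]
  rw [key]
  exact ((E X).bijective.comp h).comp (E Y).symm.bijective

theorem gen_step {τ : D ⥤ D} {m : ℕ} (hL : LefschetzData τ A m)
    {L : D ⥤ ObjectProperty.FullSubcategory (fun X : D => X ∈ A 0)} (adj : L ⊣ incl (A 0))
    (k : ℕ) (hk : k + 1 ≤ m) (B : Set D) (hB : IsTriangulatedSub B)
    (hgen : ∀ Z ∈ twist τ (k + 1) (prim A k), (incl (A 0)).obj (L.obj Z) ∈ B) :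
    ∀ X ∈ twist τ (k + 1) (A k), (incl (A 0)).obj (L.obj X) ∈ B := by
  intro X hX
  obtain ⟨X₀, hX₀, ⟨e⟩⟩ := hX
  haveI := hL.equiv
  haveI hGE : (funPow τ (k + 1)).IsEquivalence := funPow_isEquivalence τ (k + 1)
  haveI : (incl (A (k + 1))).IsLeftAdjoint := (hL.admissible (k + 1)).1
  let adj2 : incl (A (k + 1)) ⊣ (incl (A (k + 1))).rightAdjoint :=
    Adjunction.ofIsLeftAdjoint (incl (A (k + 1)))
  obtain ⟨Q, q, δ, hT₁⟩ := distinguished_cocone_triangle (adj2.counit.app X₀)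
  have hN : (incl (A (k + 1))).obj ((incl (A (k + 1))).rightAdjoint.obj X₀) ∈ A (k + 1) :=
    ((incl (A (k + 1))).rightAdjoint.obj X₀).property
  have hQA : Q ∈ A k := (hL.triangSub k).ext₂ _ (rot_of_distTriang _ hT₁) hX₀
    ((hL.triangSub k).shift _ 1 (hL.chain k hN))
  have hcz12 := comp_distTriang_mor_zero₁₂ _ hT₁
  have hcz23 := comp_distTriang_mor_zero₂₃ _ hT₁
  have hcz31 := comp_distTriang_mor_zero₃₁ _ hT₁
  simp only [Triangle.mk_mor₁, Triangle.mk_mor₂, Triangle.mk_mor₃] at hcz12 hcz23 hcz31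
  have hbijc : ∀ b' ∈ A (k + 1), Function.Bijective
      fun g : b' ⟶ (incl (A (k + 1))).obj ((incl (A (k + 1))).rightAdjoint.obj X₀) =>
        g ≫ adj2.counit.app X₀ := fun b' hb' => counit_postcomp_bij adj2 X₀ b' hb'
  have hQprim : Q ∈ prim A k := by
    refine ⟨hQA, ?_⟩
    intro b hb v
    have h2 : v ≫ δ = 0 := by
      apply (postcomp_shift_bij (adj2.counit.app X₀) b
        (hbijc _ ((hL.triangSub (k + 1)).shift b (-1) hb))).1
      show (v ≫ δ) ≫ (shiftFunctor D (1 : ℤ)).map (adj2.counit.app X₀)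
        = (0 : b ⟶ _) ≫ (shiftFunctor D (1 : ℤ)).map (adj2.counit.app X₀)
      erw [zero_comp, Category.assoc, hcz31, comp_zero]
    obtain ⟨s, hs⟩ := Triangle.coyoneda_exact₃ _ hT₁ v h2
    simp only [Triangle.mk_obj₂, Triangle.mk_mor₂] at hs
    obtain ⟨s', hs'⟩ := (hbijc b hb).2 s
    have hs'' : s' ≫ adj2.counit.app X₀ = s := hs'
    erw [hs, ← hs'', Category.assoc, hcz12, comp_zero]; rfl
  let G := funPow τ (k + 1)
  let FF : G.FullyFaithful := Functor.FullyFaithful.ofFullyFaithful G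
  have hbijG : ∀ a ∈ A 0, Function.Bijective
      fun g : G.obj Q ⟶ a => G.map q ≫ g := by
    intro a ha
    have hiso : G.obj (G.objPreimage a) ≅ a := G.objObjPreimageIso a
    have hvan : ∀ N' : D, N' ∈ A (k + 1) → ∀ t : N' ⟶ G.objPreimage a, t = 0 := by
      intro N' hN' t
      rcases Nat.lt_or_ge (k + 1) m with hlt | hge
      · have hzero : ∀ u : G.obj N' ⟶ a, u = 0 := fun u =>
          hL.sod.semiorthogonal (i := ⟨k + 1, hlt⟩) (j := ⟨0, hL.pos⟩)
            (Fin.mk_lt_mk.mpr (Nat.succ_pos k)) (G.obj N') ⟨N', hN', ⟨Iso.refl _⟩⟩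
            a ⟨a, ha, ⟨Iso.refl _⟩⟩ u
        apply FF.map_injective
        have e1 : G.map t ≫ hiso.hom = G.map (0 : N' ⟶ G.objPreimage a) ≫ hiso.hom := by
          rw [hzero (G.map t ≫ hiso.hom), hzero (G.map (0 : N' ⟶ G.objPreimage a) ≫ hiso.hom)]
        rwa [cancel_mono] at e1
      · exact (hL.vanish (k + 1) hge N' hN').eq_of_src t 0
    have hq : Function.Bijective fun t : Q ⟶ G.objPreimage a => q ≫ t := by
      constructor
      · intro t₁ t₂ h12
        have h12' : q ≫ (t₁ - t₂) = 0 := by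
          rw [Preadditive.comp_sub, sub_eq_zero]; exact h12
        obtain ⟨s, hs⟩ := Triangle.yoneda_exact₃ _ hT₁ (t₁ - t₂) h12'
        simp only [Triangle.mk_obj₁, Triangle.mk_mor₃] at hs
        have hs0 : s = 0 := hvan _ ((hL.triangSub (k + 1)).shift _ 1 hN) s
        have h00 : t₁ - t₂ = 0 := by erw [hs, hs0, comp_zero]; rfl
        exact sub_eq_zero.mp h00
      · intro t
        have h0 : adj2.counit.app X₀ ≫ t = 0 := hvan _ hN _
        obtain ⟨t', ht'⟩ := Triangle.yoneda_exact₂ _ hT₁ t h0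
        simp only [Triangle.mk_obj₃, Triangle.mk_mor₂] at ht'
        exact ⟨t', ht'.symm⟩
    exact transport_precomp_bij FF hiso q hq
  obtain ⟨M, α, β, hT₂⟩ := distinguished_cocone_triangle₁ (G.map q)
  have hcz12' := comp_distTriang_mor_zero₁₂ _ hT₂
  have hcz23' := comp_distTriang_mor_zero₂₃ _ hT₂
  simp only [Triangle.mk_mor₁, Triangle.mk_mor₂, Triangle.mk_mor₃] at hcz12' hcz23'
  have hM1 : ∀ a ∈ A 0, ∀ w : (shiftFunctor D (1 : ℤ)).obj M ⟶ a, w = 0 := by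
    intro a ha w
    have hz : β ≫ w = 0 := by
      apply (hbijG a ha).1
      show G.map q ≫ β ≫ w = G.map q ≫ 0
      erw [comp_zero, ← Category.assoc, hcz23', zero_comp]
    obtain ⟨s, hs⟩ := Triangle.yoneda_exact₃ _ (rot_of_distTriang _ hT₂) w hz
    simp only [Triangle.rotate_obj₁, Triangle.rotate_mor₃, Triangle.mk_obj₂,
      Triangle.mk_mor₁] at hs
    obtain ⟨s₂, hs₂⟩ := (precomp_shift_bij (G.map q) 1 a
      (hbijG _ ((hL.triangSub 0).shift a (-1) ha))).2 s
    have hs₂' : (shiftFunctor D (1 : ℤ)).map (G.map q) ≫ s₂ = s := hs₂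
    have hzz : (shiftFunctor D (1 : ℤ)).map α ≫ (shiftFunctor D (1 : ℤ)).map (G.map q) = 0 := by
      erw [← Functor.map_comp, hcz12', Functor.map_zero]
    erw [hs, ← hs₂', Preadditive.neg_comp, ← Category.assoc, hzz, zero_comp, neg_zero]; rfl
  have hM : ∀ a ∈ A 0, ∀ v : M ⟶ a, v = 0 := by
    intro a ha v
    have h1 : (shiftFunctor D (1 : ℤ)).map v = 0 :=
      hM1 _ ((hL.triangSub 0).shift a 1 ha) ((shiftFunctor D (1 : ℤ)).map v)
    apply (shiftFunctor D (1 : ℤ)).map_injective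
    rw [h1, Functor.map_zero]
  obtain ⟨T', hT'd, h1, h2, ⟨e3⟩⟩ := P_map_triangle adj (hL.triangSub 0) _ hT₂
  have hz1 : T'.obj₁ ∈ B := by
    rw [h1]
    exact hB.zero _ (P_isZero adj M hM)
  have hz3 : T'.obj₃ ∈ B :=
    hB.isoClosed e3.symm (hgen _ ⟨Q, hQprim, ⟨Iso.refl _⟩⟩)
  have hz2 : T'.obj₂ ∈ B := hB.ext₂ T' hT'd hz1 hz3
  have hGX₀ : (incl (A 0)).obj (L.obj (G.obj X₀)) ∈ B := h2 ▸ hz2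
  exact hB.isoClosed ((incl (A 0)).mapIso (L.mapIso e)) hGX₀

end Triang

end Helpers

/-- Let `D = ⟨A_0, A_1(1), …, A_{m-1}(m-1)⟩` be a Lefschetz decomposition with respect to an
autoequivalence `F ↦ F(1)`, with primitive subcategories `a_j`, and let `α_0^* : D → A_0` be
the left adjoint of the inclusion `A_0 → D`.  Then for `1 ≤ r ≤ m` one has
`α_0^*(⟨A_0(1), …, A_{r-1}(r)⟩) ⊆ ⟨α_0^*(a_0(1)), …, α_0^*(a_{r-1}(r))⟩`. -/
theorem statement_16 {D : Type u} [Category.{v} D] [HasZeroObject D] [Preadditive D]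
    [HasShift D ℤ] [∀ n : ℤ, (shiftFunctor D n).Additive] [Pretriangulated D]
    (τ : D ⥤ D) (A : ℕ → Set D) (m : ℕ) (hL : LefschetzData τ A m)
    (L : D ⥤ ObjectProperty.FullSubcategory (fun X : D => X ∈ A 0)) (adj : L ⊣ incl (A 0))
    (r : ℕ) (hr1 : 1 ≤ r) (hrm : r ≤ m) :
    ∀ X ∈ triangulatedClosure (⋃ k : Fin r, twist τ ((k : ℕ) + 1) (A (k : ℕ))),
      (incl (A 0)).obj (L.obj X) ∈
        triangulatedClosure (⋃ k : Fin r,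
          {Y : D | ∃ Z ∈ twist τ ((k : ℕ) + 1) (prim A (k : ℕ)),
            Nonempty ((incl (A 0)).obj (L.obj Z) ≅ Y)}) := by
  intro X hX
  have hA0 := hL.triangSub 0
  set gens : Set D := ⋃ k : Fin r, {Y : D | ∃ Z ∈ twist τ ((k : ℕ) + 1) (prim A (k : ℕ)),
      Nonempty ((incl (A 0)).obj (L.obj Z) ≅ Y)} with hgens
  refine hX {X' : D | (incl (A 0)).obj (L.obj X') ∈ triangulatedClosure gens} ?_ ?_
  · constructor
    · intro X' hX'
      exact (isTriangulatedSub_triangulatedClosure gens).zero _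
        (P_isZero adj X' fun a _ f => hX'.eq_of_src f 0)
    · intro X' Y' e hX'
      exact (isTriangulatedSub_triangulatedClosure gens).isoClosed
        ((incl (A 0)).mapIso (L.mapIso e)) hX'
    · intro X' n hX'
      obtain ⟨e⟩ := P_shift_iso adj hA0 X' n
      exact (isTriangulatedSub_triangulatedClosure gens).isoClosed e.symm
        ((isTriangulatedSub_triangulatedClosure gens).shift _ n hX')
    · intro T hT h1 h3
      obtain ⟨T', hT'd, e1, e2, ⟨e3⟩⟩ := P_map_triangle adj hA0 T hT
      have h1' : T'.obj₁ ∈ triangulatedClosure gens := by rw [e1]; exact h1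
      have h3' : T'.obj₃ ∈ triangulatedClosure gens :=
        (isTriangulatedSub_triangulatedClosure gens).isoClosed e3.symm h3
      have h2' := (isTriangulatedSub_triangulatedClosure gens).ext₂ T' hT'd h1' h3'
      rwa [e2] at h2'
  · intro X' hX'
    rw [Set.mem_iUnion] at hX'
    obtain ⟨k, hk⟩ := hX'
    exact gen_step hL adj (k : ℕ) (Nat.succ_le_of_lt (lt_of_lt_of_le k.isLt hrm))
      (triangulatedClosure gens) (isTriangulatedSub_triangulatedClosure gens)
      (fun Z hZ => subset_triangulatedClosure gens
        (Set.mem_iUnion.2 ⟨k, ⟨Z, hZ, ⟨Iso.refl _⟩⟩⟩)) X' hk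

end HPD
end
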